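/- arXiv:1502.03590 — 5 statements merged into one kernel-verified Lean document; each statement's English description precedes it below -/
import Mathlib

section
/- Let n, p, w_p, w_o, y_p be positive even integers, and let A_p (n×n), C_p (y_p×n), K (n×y_p), B_p (n×w_p), B_o (n×w_o) be real matrices with D_p = [I_{y_p} 0] (y_p×w_p). Define the joint matrices A = [[A_p, 0],[K·C_p, A_p − K·C_p]] (2n×2n) and B = [[B_p, 0],[K·D_p, B_o]] (2n×(w_p+w_o)), and E_p = [I_n 0], E_o = [0 I_n] (n×2n). Assume A_p and A_p − K·C_p are Hurwitz. For a symmetric 2n×2n real matrix Σ₀, let Σ(t) be the solution of the Lyapunov matrix ODE Σ'(t) = A·Σ(t) + Σ(t)·Aᵀ + B·Bᵀ with Σ(0) = Σ₀. Then E_p·Σ(t)·E_pᵀ − E_o·Σ(t)·E_oᵀ → 0 as t → ∞ for every initial condition Σ₀ if and only if (E_o ⊗ E_o − E_p ⊗ E_p)·(I_{2n} ⊗ A + A ⊗ I_{2n})⁻¹·vec(B·Bᵀ) = 0. -/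
open Matrix MeasureTheory Filter NormedSpace
open scoped Kronecker

noncomputable section

/-- A real square matrix is Hurwitz if every eigenvalue of it, viewed as a complex matrix,
has strictly negative real part. -/
def IsHurwitz {ι : Type*} [Fintype ι] [DecidableEq ι] (M : Matrix ι ι ℝ) : Prop :=
  ∀ μ ∈ spectrum ℂ (M.map Complex.ofReal), μ.re < 0

/-- Column-stacking vectorization of a matrix: `vecM M (j, i) = M i j`. -/
def vecM {m n : Type*} (M : Matrix m n ℝ) : n × m → ℝ := fun p => M p.2 p.1

section AuxCov

variable {ι : Type*} [Fintype ι] [DecidableEq ι]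

lemma coeff_tendsto {μ : ℂ} (hμ : μ.re < 0) (m : ℕ) :
    Tendsto (fun t : ℝ => Complex.exp ((t : ℂ) * μ) * ((m.factorial : ℂ)⁻¹ * (t : ℂ) ^ m))
      atTop (nhds 0) := by
  rw [tendsto_zero_iff_norm_tendsto_zero]
  have hpos : (0 : ℝ) < -μ.re := by linarith
  have h1 : Tendsto (fun t : ℝ => ((-μ.re) * t) ^ m * Real.exp (-((-μ.re) * t))) atTop (nhds 0) :=
    (Real.tendsto_pow_mul_exp_neg_atTop_nhds_zero m).comp (tendsto_id.const_mul_atTop hpos)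
  have h2 : Tendsto (fun t : ℝ => (m.factorial : ℝ)⁻¹ * (((-μ.re) ^ m)⁻¹ *
      (((-μ.re) * t) ^ m * Real.exp (-((-μ.re) * t))))) atTop (nhds 0) := by
    simpa using (h1.const_mul (((-μ.re) ^ m)⁻¹)).const_mul ((m.factorial : ℝ)⁻¹)
  refine h2.congr' ?_
  filter_upwards [eventually_ge_atTop (0 : ℝ)] with t ht
  have hre : ((t : ℂ) * μ).re = t * μ.re := by simp [Complex.mul_re]
  have hnorm : ‖Complex.exp ((t : ℂ) * μ) * ((m.factorial : ℂ)⁻¹ * (t : ℂ) ^ m)‖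
      = Real.exp (t * μ.re) * ((m.factorial : ℝ)⁻¹ * t ^ m) := by
    rw [norm_mul, norm_mul, norm_inv, norm_pow,
      Complex.norm_exp, hre]
    simp [Complex.norm_real, abs_of_nonneg ht]
  rw [hnorm]
  have hexp : -((-μ.re) * t) = t * μ.re := by ring
  rw [hexp, mul_pow]
  field_simp [hpos.ne']

lemma exp_smul_one_complex (z : ℂ) :
    exp (z • (1 : Matrix ι ι ℂ)) = Complex.exp z • (1 : Matrix ι ι ℂ) := by
  letI : SeminormedRing (Matrix ι ι ℂ) := Matrix.linftyOpSemiNormedRing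
  letI : NormedRing (Matrix ι ι ℂ) := Matrix.linftyOpNormedRing
  letI : NormedAlgebra ℂ (Matrix ι ι ℂ) := Matrix.linftyOpNormedAlgebra
  rw [← Algebra.algebraMap_eq_smul_one]
  erw [← algebraMap_exp_comm (𝕂 := ℂ) (𝔸 := Matrix ι ι ℂ)]
  rw [Algebra.algebraMap_eq_smul_one, Complex.exp_eq_exp_ℂ]

lemma exp_mulVec_genEig {Mc : Matrix ι ι ℂ} {μ : ℂ} (hμ : μ.re < 0) {v : ι → ℂ} {k : ℕ}
    (hv : ((Mc - μ • 1) ^ k) *ᵥ v = 0) :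
    Tendsto (fun t : ℝ => exp (t • Mc) *ᵥ v) atTop (nhds 0) := by
  letI : SeminormedRing (Matrix ι ι ℂ) := Matrix.linftyOpSemiNormedRing
  letI : NormedRing (Matrix ι ι ℂ) := Matrix.linftyOpNormedRing
  letI : NormedAlgebra ℂ (Matrix ι ι ℂ) := Matrix.linftyOpNormedAlgebra
  set N : Matrix ι ι ℂ := Mc - μ • 1 with hN
  -- linear map Q ↦ Q *ᵥ v, continuous
  let L : Matrix ι ι ℂ →ₗ[ℂ] (ι → ℂ) :=
    { toFun := fun Q => Q *ᵥ v
      map_add' := fun X Y => Matrix.add_mulVec X Y v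
      map_smul' := fun c X => Matrix.smul_mulVec c X v }
  have hLcont : Continuous L := L.continuous_of_finiteDimensional
  -- split exponent
  have hsplit : ∀ t : ℝ, exp (t • Mc) = Complex.exp ((t : ℂ) * μ) • exp (t • N) := by
    intro t
    have h1 : t • Mc = ((t : ℂ) * μ) • (1 : Matrix ι ι ℂ) + t • N := by
      rw [hN, smul_sub]
      have : ((t : ℂ) * μ) • (1 : Matrix ι ι ℂ) = t • (μ • (1 : Matrix ι ι ℂ)) := by
        rw [mul_smul, ← Complex.coe_algebraMap, algebraMap_smul]
      rw [this]
      abel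
    rw [h1, Matrix.exp_add_of_commute, exp_smul_one_complex, Matrix.smul_mul, Matrix.one_mul]
    exact (Commute.one_left (t • N)).smul_left _
  -- series for exp (t • N) *ᵥ v
  have hser : ∀ t : ℝ, exp (t • N) *ᵥ v
      = ∑ m ∈ Finset.range k, ((m.factorial : ℂ)⁻¹ * (t : ℂ) ^ m) • (N ^ m *ᵥ v) := by
    intro t
    have hs : HasSum (fun m : ℕ => ((m.factorial : ℂ)⁻¹) • (t • N) ^ m) (exp (t • N)) :=
      exp_series_hasSum_exp' (t • N)
    have hs2 : HasSum (fun m : ℕ => L (((m.factorial : ℂ)⁻¹) • (t • N) ^ m)) (L (exp (t • N))) :=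
      hs.map L hLcont
    have hterm : ∀ m : ℕ, L (((m.factorial : ℂ)⁻¹) • (t • N) ^ m)
        = ((m.factorial : ℂ)⁻¹ * (t : ℂ) ^ m) • (N ^ m *ᵥ v) := by
      intro m
      have : (t • N) ^ m = ((t : ℂ) ^ m) • N ^ m := by
        rw [← algebraMap_smul ℂ t N, smul_pow]
        rfl
      rw [this, smul_smul, L.map_smul]
      rfl
    simp only [hterm] at hs2
    have hzero : ∀ m ∉ Finset.range k, ((m.factorial : ℂ)⁻¹ * (t : ℂ) ^ m) • (N ^ m *ᵥ v) = 0 := by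
      intro m hm
      rw [Finset.mem_range, not_lt] at hm
      have : N ^ m *ᵥ v = 0 := by
        have : N ^ m = N ^ (m - k) * N ^ k := by rw [← pow_add]; congr 1; omega
        rw [this, ← Matrix.mulVec_mulVec, hv, Matrix.mulVec_zero]
      rw [this, smul_zero]
    exact hs2.unique (hasSum_sum_of_ne_finset_zero hzero)
  have : ∀ t : ℝ, exp (t • Mc) *ᵥ v
      = ∑ m ∈ Finset.range k,
          (Complex.exp ((t : ℂ) * μ) * ((m.factorial : ℂ)⁻¹ * (t : ℂ) ^ m)) • (N ^ m *ᵥ v) := by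
    intro t
    rw [hsplit t, Matrix.smul_mulVec, hser t, Finset.smul_sum]
    simp [smul_smul]
  simp only [this]
  rw [show (0 : ι → ℂ) = ∑ m ∈ Finset.range k, (0 : ι → ℂ) by simp]
  refine tendsto_finset_sum _ fun m _ => ?_
  simpa using (coeff_tendsto hμ m).smul_const (N ^ m *ᵥ v)

lemma hurwitz_exp_mulVec_tendsto {Mc : Matrix ι ι ℂ}
    (hM : ∀ μ ∈ spectrum ℂ Mc, μ.re < 0) (x : ι → ℂ) :
    Tendsto (fun t : ℝ => exp (t • Mc) *ᵥ x) atTop (nhds 0) := by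
  let f : Module.End ℂ (ι → ℂ) := Matrix.toLinAlgEquiv' Mc
  have hx : x ∈ ⨆ μ : ℂ, f.maxGenEigenspace μ := by
    rw [Module.End.iSup_maxGenEigenspace_eq_top]; trivial
  refine Submodule.iSup_induction _ (motive := fun y =>
      Tendsto (fun t : ℝ => exp (t • Mc) *ᵥ y) atTop (nhds 0)) hx ?_ ?_ ?_
  · intro μ v hv
    rcases eq_or_ne v 0 with rfl | hv0
    · simpa [Matrix.mulVec_zero] using tendsto_const_nhds
    · obtain ⟨k, hk⟩ := (Module.End.mem_maxGenEigenspace f μ v).mp hv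
      have hμspec : μ ∈ spectrum ℂ Mc := by
        rw [← AlgEquiv.spectrum_eq Matrix.toLinAlgEquiv' Mc]
        refine Module.End.hasEigenvalue_iff_mem_spectrum.mp ?_
        refine Module.End.hasEigenvalue_of_hasGenEigenvalue (k := k) ?_
        rw [Module.End.hasGenEigenvalue_iff]
        intro hbot
        refine hv0 ?_
        have : v ∈ f.genEigenspace μ k := Module.End.mem_genEigenspace_nat.mpr hk
        rw [hbot] at this
        simpa using this
      have hvec : ((Mc - μ • 1) ^ k) *ᵥ v = 0 := by
        have h1 : f - μ • 1 = Matrix.toLinAlgEquiv' (Mc - μ • 1) := by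
          simp [f, map_sub, _root_.map_smul, _root_.map_one]
        have h2 : ((f - μ • 1) ^ k) v = ((Mc - μ • 1) ^ k) *ᵥ v := by
          rw [h1, ← map_pow, Matrix.toLinAlgEquiv'_apply]
        rw [← h2]
        exact hk
      exact exp_mulVec_genEig (hM μ hμspec) hvec
  · simpa [Matrix.mulVec_zero] using tendsto_const_nhds
  · intro y z hy hz
    simpa [Matrix.mulVec_add] using hy.add hz

lemma hurwitz_exp_entry_tendsto {M : Matrix ι ι ℝ} (hM : IsHurwitz M) (i j : ι) :
    Tendsto (fun t : ℝ => exp (t • M) i j) atTop (nhds 0) := by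
  set Mc := M.map Complex.ofReal with hMc
  have hmap : ∀ t : ℝ, (exp (t • M)).map Complex.ofReal = exp (t • Mc) := by
    intro t
    letI : SeminormedRing (Matrix ι ι ℝ) := Matrix.linftyOpSemiNormedRing
    letI : NormedRing (Matrix ι ι ℝ) := Matrix.linftyOpNormedRing
    letI : NormedAlgebra ℝ (Matrix ι ι ℝ) := Matrix.linftyOpNormedAlgebra
    letI : SeminormedRing (Matrix ι ι ℂ) := Matrix.linftyOpSemiNormedRing
    letI : NormedRing (Matrix ι ι ℂ) := Matrix.linftyOpNormedRing
    letI : NormedAlgebra ℝ (Matrix ι ι ℂ) := Matrix.linftyOpNormedAlgebra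
    letI : NormedAlgebra ℂ (Matrix ι ι ℂ) := Matrix.linftyOpNormedAlgebra
    letI : NormedAlgebra ℚ (Matrix ι ι ℝ) := Matrix.linftyOpNormedAlgebra
    have hcont : Continuous (Complex.ofRealHom.mapMatrix : Matrix ι ι ℝ →+* Matrix ι ι ℂ) := by
      show Continuous fun X : Matrix ι ι ℝ => X.map Complex.ofReal
      exact Continuous.matrix_map continuous_id Complex.continuous_ofReal
    have h1 := map_exp (Complex.ofRealHom.mapMatrix : Matrix ι ι ℝ →+* Matrix ι ι ℂ)
      hcont (t • M)
    rw [RingHom.mapMatrix_apply, RingHom.mapMatrix_apply] at h1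
    have h2 : (t • M).map (Complex.ofRealHom : ℝ →+* ℂ) = t • Mc := by
      ext a b
      simp [hMc, Matrix.map_apply, Complex.real_smul, Complex.ofReal_mul]
    rw [h2] at h1
    have h3 : (exp : Matrix ι ι ℂ → Matrix ι ι ℂ) = exp := rfl
    exact h1
  have hentry : ∀ t : ℝ, exp (t • M) i j = (exp (t • Mc) i j).re := by
    intro t
    have := congrFun (congrFun (hmap t) i) j
    rw [Matrix.map_apply] at this
    rw [← this, Complex.ofReal_re]
  have hc : Tendsto (fun t : ℝ => exp (t • Mc) i j) atTop (nhds 0) := by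
    have h := hurwitz_exp_mulVec_tendsto hM (Pi.single j 1)
    have h2 := (tendsto_pi_nhds.mp h) i
    simp only [Matrix.mulVec_single, mul_one] at h2
    simpa using h2
  have := (Complex.continuous_re.tendsto 0).comp hc
  simp only [Complex.zero_re] at this
  exact this.congr fun t => (hentry t).symm

lemma hasDerivAt_expEntry (A : Matrix ι ι ℝ) (i j : ι) (t : ℝ) :
    HasDerivAt (fun u : ℝ => exp (u • A) i j) ((A * exp (t • A)) i j) t := by
  letI : SeminormedRing (Matrix ι ι ℝ) := Matrix.linftyOpSemiNormedRing
  letI : NormedRing (Matrix ι ι ℝ) := Matrix.linftyOpNormedRing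
  letI : NormedAlgebra ℝ (Matrix ι ι ℝ) := Matrix.linftyOpNormedAlgebra
  have h := hasDerivAt_exp_smul_const' A t
  let E : Matrix ι ι ℝ →ₗ[ℝ] ℝ :=
    (LinearMap.proj (R := ℝ) (φ := fun _ : ι => ℝ) j).comp
      (LinearMap.proj (R := ℝ) (φ := fun _ : ι => ι → ℝ) i)
  have hE : Continuous E := E.continuous_of_finiteDimensional
  let Ec : Matrix ι ι ℝ →L[ℝ] ℝ := { toLinearMap := E, cont := hE }
  exact Ec.hasFDerivAt.comp_hasDerivAt t h

lemma hasDerivAt_expEntry_neg (A : Matrix ι ι ℝ) (i j : ι) (t : ℝ) :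
    HasDerivAt (fun u : ℝ => exp ((-u) • A) i j) ((-(A * exp ((-t) • A))) i j) t := by
  have h := (hasDerivAt_expEntry A i j (-t)).comp t (hasDerivAt_neg t)
  have h2 : HasDerivAt (fun u : ℝ => exp ((-u) • A) i j)
      ((A * exp ((-t) • A)) i j * (-1)) t := h
  simpa [Matrix.neg_apply] using h2

lemma hasDerivAt_matmul {X Y : ℝ → Matrix ι ι ℝ} {X' Y' : Matrix ι ι ℝ} {u : ℝ}
    (hX : ∀ i j, HasDerivAt (fun s => X s i j) (X' i j) u)
    (hY : ∀ i j, HasDerivAt (fun s => Y s i j) (Y' i j) u) (i j : ι) :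
    HasDerivAt (fun s => (X s * Y s) i j) ((X' * Y u + X u * Y') i j) u := by
  simp only [Matrix.mul_apply, Matrix.add_apply]
  rw [← Finset.sum_add_distrib]
  exact HasDerivAt.fun_sum fun k _ => (hX i k).mul (hY k j)

lemma exp_mul_exp_neg (A : Matrix ι ι ℝ) (t : ℝ) :
    exp (t • A) * exp ((-t) • A) = 1 := by
  letI : SeminormedRing (Matrix ι ι ℝ) := Matrix.linftyOpSemiNormedRing
  letI : NormedRing (Matrix ι ι ℝ) := Matrix.linftyOpNormedRing
  letI : NormedAlgebra ℝ (Matrix ι ι ℝ) := Matrix.linftyOpNormedAlgebra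
  rw [← Matrix.exp_add_of_commute _ _ (((Commute.refl A).smul_left t).smul_right (-t))]
  rw [show t • A + (-t) • A = 0 by rw [neg_smul]; abel]
  exact NormedSpace.exp_zero

lemma commute_exp_neg (A : Matrix ι ι ℝ) (u : ℝ) :
    A * exp ((-u) • A) = exp ((-u) • A) * A := by
  letI : SeminormedRing (Matrix ι ι ℝ) := Matrix.linftyOpSemiNormedRing
  letI : NormedRing (Matrix ι ι ℝ) := Matrix.linftyOpNormedRing
  letI : NormedAlgebra ℝ (Matrix ι ι ℝ) := Matrix.linftyOpNormedAlgebra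
  exact ((Commute.refl A).smul_right (-u)).exp_right

lemma lyapunov_solution {A : Matrix ι ι ℝ} {D : ℝ → Matrix ι ι ℝ}
    (hD : ∀ t i j, HasDerivAt (fun s => D s i j) ((A * D t + D t * Aᵀ) i j) t) (t : ℝ) :
    D t = exp (t • A) * D 0 * (exp (t • A))ᵀ := by
  set E : ℝ → Matrix ι ι ℝ := fun u => exp ((-u) • A) with hE
  set g : ℝ → Matrix ι ι ℝ := fun u => E u * D u * (E u)ᵀ with hg
  have hgd : ∀ (u : ℝ) i j, HasDerivAt (fun s => g s i j) 0 u := by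
    intro u i j
    have hP : ∀ a b, HasDerivAt (fun s => (E s * D s) a b)
        ((-(A * E u) * D u + E u * (A * D u + D u * Aᵀ)) a b) u :=
      fun a b => hasDerivAt_matmul (fun a b => hasDerivAt_expEntry_neg A a b u)
        (fun a b => hD u a b) a b
    have hET : ∀ a b, HasDerivAt (fun s => (E s)ᵀ a b) ((-(A * E u))ᵀ a b) u := by
      intro a b
      exact hasDerivAt_expEntry_neg A b a u
    have h := hasDerivAt_matmul (X := fun s => E s * D s) (Y := fun s => (E s)ᵀ) hP hET i j
    have hzero : (-(A * E u) * D u + E u * (A * D u + D u * Aᵀ)) * (E u)ᵀ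
        + (E u * D u) * (-(A * E u))ᵀ = 0 := by
      have hc : A * E u = E u * A := commute_exp_neg A u
      have hct : Aᵀ * (E u)ᵀ = (E u)ᵀ * Aᵀ := by
        rw [← Matrix.transpose_mul, ← Matrix.transpose_mul, hc]
      simp only [Matrix.neg_mul, Matrix.mul_neg, Matrix.transpose_neg, Matrix.transpose_mul,
        Matrix.add_mul, Matrix.mul_add, ← Matrix.mul_assoc]
      rw [show E u * A = A * E u from hc.symm]
      rw [Matrix.mul_assoc (E u * D u) Aᵀ (E u)ᵀ, hct, ← Matrix.mul_assoc]
      abel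
    rw [hzero] at h
    simpa using h
  have hconst : ∀ (u : ℝ) i j, g u i j = g 0 i j := by
    intro u i j
    exact is_const_of_deriv_eq_zero
      (fun s => ((hgd s i j)).differentiableAt)
      (fun s => (hgd s i j).deriv) u 0
  have hg0 : g 0 = D 0 := by
    have : E 0 = 1 := by
      rw [hE]
      simp only [neg_zero, zero_smul]
      letI : SeminormedRing (Matrix ι ι ℝ) := Matrix.linftyOpSemiNormedRing
      letI : NormedRing (Matrix ι ι ℝ) := Matrix.linftyOpNormedRing
      letI : NormedAlgebra ℝ (Matrix ι ι ℝ) := Matrix.linftyOpNormedAlgebra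
      exact NormedSpace.exp_zero
    simp [hg, this]
  have hgt : E t * D t * (E t)ᵀ = D 0 := by
    rw [← hg0]
    ext i j
    exact hconst t i j
  have h1 : exp (t • A) * E t = 1 := exp_mul_exp_neg A t
  have h2 : (E t)ᵀ * (exp (t • A))ᵀ = 1 := by
    rw [← Matrix.transpose_mul, h1, Matrix.transpose_one]
  calc D t = (exp (t • A) * E t) * D t * ((E t)ᵀ * (exp (t • A))ᵀ) := by
        rw [h1, h2, Matrix.one_mul, Matrix.mul_one]
    _ = exp (t • A) * (E t * D t * (E t)ᵀ) * (exp (t • A))ᵀ := by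
        simp only [Matrix.mul_assoc]
    _ = exp (t • A) * D 0 * (exp (t • A))ᵀ := by rw [hgt]

lemma tendsto_expconj_entry {A : Matrix ι ι ℝ} (hHA : IsHurwitz A) (R : Matrix ι ι ℝ) (i j : ι) :
    Tendsto (fun t : ℝ => (exp (t • A) * R * (exp (t • A))ᵀ) i j) atTop (nhds 0) := by
  have hrw : ∀ t : ℝ, (exp (t • A) * R * (exp (t • A))ᵀ) i j
      = ∑ l, ∑ k, exp (t • A) i k * R k l * exp (t • A) j l := by
    intro t
    simp [Matrix.mul_apply, Matrix.transpose_apply, Finset.sum_mul]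
  simp only [hrw]
  have h0 : (0 : ℝ) = ∑ _l : ι, ∑ _k : ι, (0 : ℝ) := by simp
  rw [h0]
  refine tendsto_finset_sum _ fun l _ => tendsto_finset_sum _ fun k _ => ?_
  simpa using ((hurwitz_exp_entry_tendsto hHA i k).mul tendsto_const_nhds).mul
    (hurwitz_exp_entry_tendsto hHA j l)

omit [DecidableEq ι] in
lemma tendsto_sandwich {κ : Type*} [Fintype κ] (P Q : Matrix κ ι ℝ) {C : ℝ → Matrix ι ι ℝ}
    (hC : ∀ a b, Tendsto (fun t => C t a b) atTop (nhds 0)) (i j : κ) :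
    Tendsto (fun t => (P * C t * Qᵀ) i j) atTop (nhds 0) := by
  have hrw : ∀ t, (P * C t * Qᵀ) i j = ∑ b, ∑ a, P i a * C t a b * Q j b := by
    intro t
    simp [Matrix.mul_apply, Matrix.transpose_apply, Finset.sum_mul]
  simp only [hrw]
  have h0 : (0 : ℝ) = ∑ _b : ι, ∑ _a : ι, (0 : ℝ) := by simp
  rw [h0]
  refine tendsto_finset_sum _ fun b _ => tendsto_finset_sum _ fun a _ => ?_
  simpa using (tendsto_const_nhds.mul (hC a b)).mul tendsto_const_nhds

lemma lyap_kernel {A : Matrix ι ι ℝ} (hHA : IsHurwitz A) {X : Matrix ι ι ℝ}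
    (hX : A * X + X * Aᵀ = 0) : X = 0 := by
  have hD : ∀ (t : ℝ) i j, HasDerivAt (fun _ : ℝ => X i j) ((A * X + X * Aᵀ) i j) t := by
    intro t i j
    have h0 : (A * X + X * Aᵀ) i j = 0 := by rw [hX]; simp
    rw [h0]
    exact hasDerivAt_const t (X i j)
  have hsol := lyapunov_solution (A := A) (D := fun _ => X) hD
  ext i j
  have hconst : ∀ t : ℝ, (exp (t • A) * X * (exp (t • A))ᵀ) i j = X i j :=
    fun t => by rw [← hsol t]
  have htt := tendsto_expconj_entry hHA X i j
  simp only [hconst] at htt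
  have := tendsto_nhds_unique htt (tendsto_const_nhds (x := X i j))
  simpa using this.symm

omit [Fintype ι] [DecidableEq ι] in
lemma vecM_inj {m' : Type*} {X Y : Matrix ι m' ℝ} (h : vecM X = vecM Y) : X = Y := by
  ext i j
  exact congrFun h (j, i)

lemma kron_mulVec {l m o q : Type*} [Fintype m] [Fintype q] (P : Matrix l m ℝ) (Q : Matrix o q ℝ)
    (X : Matrix q m ℝ) : (P ⊗ₖ Q) *ᵥ vecM X = vecM (Q * X * Pᵀ) := by
  funext ab
  obtain ⟨a, b⟩ := ab
  simp only [Matrix.mulVec, dotProduct, vecM, Matrix.kroneckerMap_apply, Matrix.mul_apply,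
    Matrix.transpose_apply, Fintype.sum_prod_type, Finset.sum_mul, Finset.mul_sum]
  refine Finset.sum_congr rfl fun c _ => Finset.sum_congr rfl fun d _ => ?_
  ring

lemma isHurwitz_fromBlocks {n₁ n₂ : Type*} [Fintype n₁] [DecidableEq n₁] [Fintype n₂]
    [DecidableEq n₂] {A₁ : Matrix n₁ n₁ ℝ} {C : Matrix n₂ n₁ ℝ} {A₂ : Matrix n₂ n₂ ℝ}
    (h1 : IsHurwitz A₁) (h2 : IsHurwitz A₂) :
    IsHurwitz (Matrix.fromBlocks A₁ 0 C A₂) := by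
  intro μ hμ
  rw [spectrum.mem_iff] at hμ
  have hmap : (Matrix.fromBlocks A₁ 0 C A₂).map Complex.ofReal
      = Matrix.fromBlocks (A₁.map Complex.ofReal) 0 (C.map Complex.ofReal)
        (A₂.map Complex.ofReal) := by
    rw [Matrix.fromBlocks_map, Matrix.map_zero _ Complex.ofReal_zero]
  have halg : algebraMap ℂ (Matrix (n₁ ⊕ n₂) (n₁ ⊕ n₂) ℂ) μ
      = Matrix.fromBlocks (μ • 1) 0 0 (μ • 1) := by
    rw [Algebra.algebraMap_eq_smul_one, ← Matrix.fromBlocks_one, Matrix.fromBlocks_smul]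
    simp
  have hdiff : algebraMap ℂ (Matrix (n₁ ⊕ n₂) (n₁ ⊕ n₂) ℂ) μ
        - (Matrix.fromBlocks A₁ 0 C A₂).map Complex.ofReal
      = Matrix.fromBlocks (μ • 1 - A₁.map Complex.ofReal) 0 (-(C.map Complex.ofReal))
        (μ • 1 - A₂.map Complex.ofReal) := by
    rw [halg, hmap, sub_eq_add_neg, Matrix.fromBlocks_neg, Matrix.fromBlocks_add]
    simp [sub_eq_add_neg]
  rw [hdiff] at hμ
  rw [Matrix.isUnit_iff_isUnit_det, isUnit_iff_ne_zero, not_ne_iff,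
    Matrix.det_fromBlocks_zero₁₂] at hμ
  rcases mul_eq_zero.mp hμ with h | h
  · refine h1 μ ?_
    rw [spectrum.mem_iff, Matrix.isUnit_iff_isUnit_det, isUnit_iff_ne_zero, not_ne_iff,
      Algebra.algebraMap_eq_smul_one]
    exact h
  · refine h2 μ ?_
    rw [spectrum.mem_iff, Matrix.isUnit_iff_isUnit_det, isUnit_iff_ne_zero, not_ne_iff,
      Algebra.algebraMap_eq_smul_one]
    exact h


end AuxCov

/-- Time-domain covariance-tracking condition (Theorem 1, condition 2):
for a Hurwitz joint plant–observer matrix, the plant and observer covariance blocks of every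
solution of the Lyapunov ODE converge to each other iff the Kronecker-vectorized condition
`(E_o ⊗ E_o − E_p ⊗ E_p)·(I ⊗ A + A ⊗ I)⁻¹·vec(B·Bᵀ) = 0` holds. -/
theorem covariance_tracking_condition
    (n p wp wo yp : ℕ)
    (hn : Even n) (hn0 : 0 < n) (hp : Even p) (hp0 : 0 < p)
    (hwp : Even wp) (hwp0 : 0 < wp) (hwo : Even wo) (hwo0 : 0 < wo)
    (hyp : Even yp) (hyp0 : 0 < yp) (hypwp : yp ≤ wp)
    (Ap : Matrix (Fin n) (Fin n) ℝ) (Cp : Matrix (Fin yp) (Fin n) ℝ)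
    (K : Matrix (Fin n) (Fin yp) ℝ) (Bp : Matrix (Fin n) (Fin wp) ℝ)
    (Bo : Matrix (Fin n) (Fin wo) ℝ)
    (Dp : Matrix (Fin yp) (Fin wp) ℝ)
    (hDp : Dp = Matrix.of fun (i : Fin yp) (j : Fin wp) => if (j : ℕ) = (i : ℕ) then (1 : ℝ) else 0)
    (A : Matrix (Fin n ⊕ Fin n) (Fin n ⊕ Fin n) ℝ)
    (hA : A = Matrix.fromBlocks Ap 0 (K * Cp) (Ap - K * Cp))
    (B : Matrix (Fin n ⊕ Fin n) (Fin wp ⊕ Fin wo) ℝ)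
    (hB : B = Matrix.fromBlocks Bp 0 (K * Dp) Bo)
    (Ep Eo : Matrix (Fin n) (Fin n ⊕ Fin n) ℝ)
    (hEp : Ep = Matrix.of fun i j =>
      Sum.elim (fun j' => if i = j' then (1 : ℝ) else 0) (fun _ => 0) j)
    (hEo : Eo = Matrix.of fun i j =>
      Sum.elim (fun _ => (0 : ℝ)) (fun j' => if i = j' then 1 else 0) j)
    (hHp : IsHurwitz Ap) (hHo : IsHurwitz (Ap - K * Cp)) :
    (∀ Sig0 : Matrix (Fin n ⊕ Fin n) (Fin n ⊕ Fin n) ℝ, Sig0.IsSymm →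
      ∀ S : ℝ → Matrix (Fin n ⊕ Fin n) (Fin n ⊕ Fin n) ℝ, S 0 = Sig0 →
        (∀ t : ℝ, ∀ i j, HasDerivAt (fun s => S s i j) ((A * S t + S t * Aᵀ + B * Bᵀ) i j) t) →
        ∀ i j, Tendsto (fun t => (Ep * S t * Epᵀ - Eo * S t * Eoᵀ) i j) atTop (nhds 0))
    ↔ (Eo ⊗ₖ Eo - Ep ⊗ₖ Ep) *ᵥ
        (((1 : Matrix (Fin n ⊕ Fin n) (Fin n ⊕ Fin n) ℝ) ⊗ₖ A
          + A ⊗ₖ (1 : Matrix (Fin n ⊕ Fin n) (Fin n ⊕ Fin n) ℝ))⁻¹ *ᵥ vecM (B * Bᵀ)) = 0 := by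
  have hHA : IsHurwitz A := by rw [hA]; exact isHurwitz_fromBlocks hHp hHo
  set M : Matrix ((Fin n ⊕ Fin n) × (Fin n ⊕ Fin n)) ((Fin n ⊕ Fin n) × (Fin n ⊕ Fin n)) ℝ :=
    (1 : Matrix (Fin n ⊕ Fin n) (Fin n ⊕ Fin n) ℝ) ⊗ₖ A
      + A ⊗ₖ (1 : Matrix (Fin n ⊕ Fin n) (Fin n ⊕ Fin n) ℝ) with hM
  have hMact : ∀ X : Matrix (Fin n ⊕ Fin n) (Fin n ⊕ Fin n) ℝ,
      M *ᵥ vecM X = vecM (A * X + X * Aᵀ) := by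
    intro X
    have h1 : ((1 : Matrix (Fin n ⊕ Fin n) (Fin n ⊕ Fin n) ℝ) ⊗ₖ A) *ᵥ vecM X
        = vecM (A * X) := by
      rw [kron_mulVec, Matrix.transpose_one, Matrix.mul_one]
    have h2 : (A ⊗ₖ (1 : Matrix (Fin n ⊕ Fin n) (Fin n ⊕ Fin n) ℝ)) *ᵥ vecM X
        = vecM (X * Aᵀ) := by
      rw [kron_mulVec, Matrix.one_mul]
    rw [hM, Matrix.add_mulVec, h1, h2]
    funext p
    simp [vecM]
  have hker : ∀ X : Matrix (Fin n ⊕ Fin n) (Fin n ⊕ Fin n) ℝ,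
      A * X + X * Aᵀ = 0 → X = 0 := fun X h => lyap_kernel hHA h
  have hdet : IsUnit M.det := by
    rw [isUnit_iff_ne_zero]
    intro hd
    obtain ⟨v, hv0, hv⟩ := Matrix.exists_mulVec_eq_zero_iff.mpr hd
    set X : Matrix (Fin n ⊕ Fin n) (Fin n ⊕ Fin n) ℝ :=
      Matrix.of fun i j => v (j, i) with hX
    have hvecX : vecM X = v := by funext p; cases p; rfl
    have hX0 : A * X + X * Aᵀ = 0 := by
      apply vecM_inj
      rw [← hMact, hvecX, hv]
      rfl
    exact hv0 (by rw [← hvecX, hker X hX0]; rfl)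
  set Y : Matrix (Fin n ⊕ Fin n) (Fin n ⊕ Fin n) ℝ :=
    Matrix.of fun i j => (M⁻¹ *ᵥ vecM (B * Bᵀ)) (j, i) with hY
  have hvecY : vecM Y = M⁻¹ *ᵥ vecM (B * Bᵀ) := by funext p; cases p; rfl
  have hYeq : A * Y + Y * Aᵀ = B * Bᵀ := by
    apply vecM_inj
    rw [← hMact, hvecY, Matrix.mulVec_mulVec, Matrix.mul_nonsing_inv _ hdet, Matrix.one_mulVec]
  have hYsymm : Yᵀ = Y := by
    have h1 : A * Yᵀ + Yᵀ * Aᵀ = B * Bᵀ := by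
      have h := congrArg Matrix.transpose hYeq
      rw [Matrix.transpose_add, Matrix.transpose_mul, Matrix.transpose_mul,
        Matrix.transpose_transpose, Matrix.transpose_mul, Matrix.transpose_transpose] at h
      rw [add_comm] at h
      exact h
    have hdiff : A * (Yᵀ - Y) + (Yᵀ - Y) * Aᵀ = 0 := by
      have h2 : A * Yᵀ + Yᵀ * Aᵀ - (A * Y + Y * Aᵀ) = 0 := by rw [h1, hYeq, sub_self]
      calc A * (Yᵀ - Y) + (Yᵀ - Y) * Aᵀ
          = A * Yᵀ + Yᵀ * Aᵀ - (A * Y + Y * Aᵀ) := by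
            rw [Matrix.mul_sub, Matrix.sub_mul]; abel
        _ = 0 := h2
    exact sub_eq_zero.mp (hker _ hdiff)
  have hRHS : ((Eo ⊗ₖ Eo - Ep ⊗ₖ Ep) *ᵥ (M⁻¹ *ᵥ vecM (B * Bᵀ)) = 0)
      ↔ Eo * Y * Eoᵀ = Ep * Y * Epᵀ := by
    rw [← hvecY, Matrix.sub_mulVec, kron_mulVec, kron_mulVec]
    constructor
    · intro h
      apply vecM_inj
      have h2 : vecM (Eo * Y * Eoᵀ) - vecM (Ep * Y * Epᵀ) = 0 := h
      rw [sub_eq_zero] at h2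
      exact h2
    · intro h
      rw [h, sub_self]
  rw [hRHS]
  constructor
  · intro h
    have hsymm : (-Y).IsSymm := by
      rw [Matrix.IsSymm, Matrix.transpose_neg, hYsymm]
    have hconstS : ∀ (t : ℝ) i j, HasDerivAt (fun _ : ℝ => (-Y) i j)
        ((A * (-Y) + (-Y) * Aᵀ + B * Bᵀ) i j) t := by
      intro t i j
      have h0 : A * (-Y) + (-Y) * Aᵀ + B * Bᵀ = 0 := by
        rw [Matrix.mul_neg, Matrix.neg_mul, ← hYeq]
        abel
      rw [h0, Matrix.zero_apply]
      exact hasDerivAt_const t ((-Y) i j)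
    have happ := h (-Y) hsymm (fun _ => -Y) rfl hconstS
    have hmat : Ep * (-Y) * Epᵀ - Eo * (-Y) * Eoᵀ = 0 := by
      ext a b
      have := tendsto_nhds_unique (happ a b)
        (tendsto_const_nhds (x := (Ep * (-Y) * Epᵀ - Eo * (-Y) * Eoᵀ) a b))
      simpa using this.symm
    rw [Matrix.mul_neg, Matrix.neg_mul, Matrix.mul_neg, Matrix.neg_mul, sub_eq_zero] at hmat
    exact (neg_inj.mp hmat).symm
  · intro hEq Sig0 _ S hS0 hder i j
    set D : ℝ → Matrix (Fin n ⊕ Fin n) (Fin n ⊕ Fin n) ℝ := fun t => S t + Y with hD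
    have hDder : ∀ (t : ℝ) a b, HasDerivAt (fun s => D s a b) ((A * D t + D t * Aᵀ) a b) t := by
      intro t a b
      have h1 : A * D t + D t * Aᵀ = A * S t + S t * Aᵀ + B * Bᵀ := by
        rw [hD]
        simp only
        rw [Matrix.mul_add, Matrix.add_mul, ← hYeq]
        abel
      rw [h1]
      exact (hder t a b).add_const (Y a b)
    have hsol := lyapunov_solution hDder
    have hsplit : ∀ t : ℝ, (Ep * S t * Epᵀ - Eo * S t * Eoᵀ) i j
        = (Ep * (exp (t • A) * D 0 * (exp (t • A))ᵀ) * Epᵀ) i j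
          - (Eo * (exp (t • A) * D 0 * (exp (t • A))ᵀ) * Eoᵀ) i j := by
      intro t
      have hS : S t = D t - Y := by rw [hD]; simp
      have hm : Ep * (D t - Y) * Epᵀ - Eo * (D t - Y) * Eoᵀ
          = Ep * D t * Epᵀ - Eo * D t * Eoᵀ := by
        rw [Matrix.mul_sub, Matrix.sub_mul, Matrix.mul_sub, Matrix.sub_mul, hEq]
        abel
      rw [hS, hm, hsol t, Matrix.sub_apply]
    rw [show (0 : ℝ) = 0 - 0 by ring]
    refine Tendsto.congr (fun t => (hsplit t).symm) (Tendsto.sub ?_ ?_)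
    · exact tendsto_sandwich Ep Ep (fun a b => tendsto_expconj_entry hHA (D 0) a b) i j
    · exact tendsto_sandwich Eo Eo (fun a b => tendsto_expconj_entry hHA (D 0) a b) i j
end
end

section
/- Let n, y_p, w_p, w_o be positive even integers with w_o ≥ 2n, and let A_p (n×n), C_p (y_p×n), K (n×y_p), B_p (n×w_p), X (n×n) be real matrices. Write Θ = Θ_n and define the complex n×n matrix N = −(i/4)·Θ·(A_p − K·C_p) − (i/4)·(A_p − K·C_p)ᵀ·Θ + (i/4)·Θ·K·Θ_{y_p}·Kᵀ·Θ − (1/4)·Θ·K·C_p·X·Θ − (1/4)·Θ·Xᵀ·(K·C_p)ᵀ·Θ − (1/4)·Θ·B_p·B_pᵀ·Θ + (1/4)·Θ·K·Kᵀ·Θ. Then N is Hermitian, and the following are equivalent: (i) N is positive semidefinite; (ii) there exists a complex (w_o/2)×n matrix Λ_o with Λ_o†·Λ_o = N. Moreover, for any such Λ_o, the matrix B_o := 2i·Θ·[−Λ_o† Λ_oᵀ]·Γ_{w_o} (where [−Λ_o† Λ_oᵀ] is the n×w_o horizontal concatenation) has all real entries and satisfies both B_o·B_oᵀ = K·C_p·X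 + Xᵀ·(K·C_p)ᵀ + B_p·B_pᵀ − K·Kᵀ and B_o·Θ_{w_o}·B_oᵀ = −(A_p − K·C_p)·Θ − Θ·(A_p − K·C_p)ᵀ − K·Θ_{y_p}·Kᵀ. -/
open Matrix
open scoped Kronecker ComplexConjugate ComplexOrder

noncomputable section

/-- For an even positive integer `m`, `Theta R m` is the `m × m` block-diagonal matrix
`I_{m/2} ⊗ J` with `J = [[0,1],[-1,0]]`, written entrywise. -/
def Theta (R : Type*) [Ring R] (m : ℕ) : Matrix (Fin m) (Fin m) R :=
  Matrix.of fun i j =>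
    if (i : ℕ) % 2 = 0 ∧ (j : ℕ) = (i : ℕ) + 1 then 1
    else if (j : ℕ) % 2 = 0 ∧ (i : ℕ) = (j : ℕ) + 1 then -1 else 0

/-- The `m × m` permutation matrix `P_m` sending `(a₁, …, a_m)` to
`(a₁, a₃, …, a_{m−1}, a₂, a₄, …, a_m)` (for `m` even). -/
def Pmat (m : ℕ) : Matrix (Fin m) (Fin m) ℂ :=
  Matrix.of fun i j =>
    if ((i : ℕ) < m / 2 ∧ (j : ℕ) = 2 * (i : ℕ))
        ∨ (m / 2 ≤ (i : ℕ) ∧ (j : ℕ) = 2 * ((i : ℕ) - m / 2) + 1) then 1 else 0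

/-- The block-diagonal matrix `I_{m/2} ⊗ M` with `M = (1/2)·[[1, i],[1, −i]]`
(for `m` even), written entrywise. -/
def blockM (m : ℕ) : Matrix (Fin m) (Fin m) ℂ :=
  Matrix.of fun i j =>
    if (i : ℕ) / 2 = (j : ℕ) / 2 then
      (if (j : ℕ) % 2 = 0 then (1 / 2 : ℂ)
       else if (i : ℕ) % 2 = 0 then Complex.I / 2 else -(Complex.I / 2))
    else 0

/-- `Γ_m = P_m·(I_{m/2} ⊗ M)`. -/
def Gamma (m : ℕ) : Matrix (Fin m) (Fin m) ℂ := Pmat m * blockM m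

/-- Horizontal concatenation of two `n × h` matrices into an `n × 2h` matrix. -/
def hconcat {n h : ℕ} (X Y : Matrix (Fin n) (Fin h) ℂ) : Matrix (Fin n) (Fin (2 * h)) ℂ :=
  Matrix.of fun i j =>
    if hj : (j : ℕ) < h then X i ⟨j, hj⟩
    else Y i ⟨(j : ℕ) - h, by have := j.isLt; omega⟩

/-- Entrywise complexification of a real matrix. -/
def cmap {m n : Type*} (M : Matrix m n ℝ) : Matrix m n ℂ := M.map Complex.ofReal


/-! ### Helper lemmas -/

lemma sum_two {ι M : Type*} [Fintype ι] [DecidableEq ι] [AddCommMonoid M] (f : ι → M)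
    (a b : ι) (hab : a ≠ b) (h0 : ∀ c, c ≠ a → c ≠ b → f c = 0) :
    ∑ c, f c = f a + f b := by
  rw [← Finset.sum_pair hab]
  exact (Finset.sum_subset (Finset.subset_univ _) (fun c _ hc => by
    simp only [Finset.mem_insert, Finset.mem_singleton] at hc
    push_neg at hc
    exact h0 c hc.1 hc.2)).symm

lemma sum_split {h : ℕ} {M : Type*} [AddCommMonoid M] (f : Fin (2*h) → M) :
    ∑ k, f k = (∑ c : Fin h, f ⟨(c:ℕ), by have := c.isLt; omega⟩)
      + ∑ c : Fin h, f ⟨h + (c:ℕ), by have := c.isLt; omega⟩ := by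
  rw [← Equiv.sum_comp (finSumFinEquiv.trans (finCongr (by omega : h + h = 2*h))) f,
    Fintype.sum_sum_type]
  congr 1 <;> refine Finset.sum_congr rfl fun c _ => ?_ <;> congr 1 <;> apply Fin.ext <;> simp

lemma theta_transpose (m : ℕ) : (Theta ℂ m)ᵀ = -(Theta ℂ m) := by
  ext i j
  simp only [Theta, transpose_apply, of_apply, Matrix.neg_apply]
  split_ifs <;> first | omega | (norm_num; try omega)

lemma theta_conjTranspose (m : ℕ) : (Theta ℂ m)ᴴ = -(Theta ℂ m) := by
  ext i j
  simp only [Theta, conjTranspose_apply, of_apply, Matrix.neg_apply]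
  split_ifs <;> first | omega | (norm_num; try omega)

lemma theta_conj (m : ℕ) : (Theta ℂ m).map (starRingEnd ℂ) = Theta ℂ m := by
  ext i j
  simp only [Theta, Matrix.map_apply, of_apply]
  split_ifs <;> simp

lemma cmap_theta (m : ℕ) : cmap (Theta ℝ m) = Theta ℂ m := by
  ext i j
  simp only [Theta, cmap, Matrix.map_apply, of_apply]
  split_ifs <;> simp

lemma theta_mul_theta {m : ℕ} (hm : Even m) : Theta ℂ m * Theta ℂ m = -1 := by
  obtain ⟨t, rfl⟩ := hm
  ext i j
  rw [Matrix.mul_apply]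
  have hi := i.isLt
  have hj := j.isLt
  by_cases hie : (i:ℕ) % 2 = 0
  · rw [Fintype.sum_eq_single (⟨(i:ℕ)+1, by omega⟩ : Fin (t+t))]
    · simp only [Theta, of_apply, Matrix.neg_apply, Matrix.one_apply, Fin.ext_iff, and_true, true_and]
      split_ifs <;> first | omega | (norm_num; try omega)
    · intro b hb
      have h0 : Theta ℂ (t+t) i b = 0 := by
        simp only [Theta, of_apply]
        simp only [ne_eq, Fin.ext_iff] at hb
        split_ifs <;> first | rfl | omega
      rw [h0, zero_mul]
  · rw [Fintype.sum_eq_single (⟨(i:ℕ)-1, by omega⟩ : Fin (t+t))]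
    · simp only [Theta, of_apply, Matrix.neg_apply, Matrix.one_apply, Fin.ext_iff, and_true, true_and]
      split_ifs <;> first | omega | (norm_num; try omega)
    · intro b hb
      have h0 : Theta ℂ (t+t) i b = 0 := by
        simp only [Theta, of_apply]
        simp only [ne_eq, Fin.ext_iff] at hb
        split_ifs <;> first | rfl | omega
      rw [h0, zero_mul]

def Sig (h : ℕ) : Matrix (Fin (2*h)) (Fin (2*h)) ℂ :=
  Matrix.of fun i j => if (i:ℕ)+h = (j:ℕ) ∨ (j:ℕ)+h = (i:ℕ) then 1 else 0
def Om (h : ℕ) : Matrix (Fin (2*h)) (Fin (2*h)) ℂ :=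
  Matrix.of fun i j => if (i:ℕ)+h = (j:ℕ) then 1 else if (j:ℕ)+h = (i:ℕ) then -1 else 0

lemma Gamma_apply' {h : ℕ} (i k : Fin (2*h)) (ci : ℕ)
    (hci : ((i:ℕ) < h ∧ ci = (i:ℕ)) ∨ (h ≤ (i:ℕ) ∧ ci = (i:ℕ) - h)) :
    Gamma (2*h) i k =
      if (k:ℕ) = 2*ci then (1/2 : ℂ)
      else if (k:ℕ) = 2*ci+1 then (if (i:ℕ) < h then Complex.I/2 else -(Complex.I/2))
      else 0 := by
  have hi := i.isLt
  have hk := k.isLt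
  have hci' : ci < h := by omega
  rw [Gamma, Matrix.mul_apply]
  have hσ : (if (i:ℕ) < h then 2*(i:ℕ) else 2*((i:ℕ)-h)+1) < 2*h := by split_ifs <;> omega
  rw [Fintype.sum_eq_single (⟨_, hσ⟩ : Fin (2*h))]
  · have hP : Pmat (2*h) i ⟨_, hσ⟩ = 1 := by
      simp only [Pmat, of_apply]
      rw [if_pos]
      rcases Nat.lt_or_ge (i:ℕ) h with hc | hc
      · exact Or.inl ⟨by omega, by simp [hc]⟩
      · exact Or.inr ⟨by omega, by simp [Nat.not_lt.2 hc]⟩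
    rw [hP, one_mul]
    simp only [blockM, of_apply]
    split_ifs <;> first | rfl | omega
  · intro b hb
    have h0 : Pmat (2*h) i b = 0 := by
      simp only [Pmat, of_apply]
      rw [if_neg]
      simp only [ne_eq, Fin.ext_iff] at hb
      rintro (⟨h1, h2⟩ | ⟨h1, h2⟩)
      · apply hb; split_ifs <;> omega
      · apply hb; split_ifs <;> omega
    rw [h0, zero_mul]

lemma ci_spec {h : ℕ} (i : Fin (2*h)) :
    ((i:ℕ) < h ∧ (if (i:ℕ) < h then (i:ℕ) else (i:ℕ)-h) = (i:ℕ))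
      ∨ (h ≤ (i:ℕ) ∧ (if (i:ℕ) < h then (i:ℕ) else (i:ℕ)-h) = (i:ℕ) - h) := by
  split_ifs with hc
  · exact Or.inl ⟨hc, rfl⟩
  · exact Or.inr ⟨by omega, rfl⟩

lemma Gamma_mul_Gamma_transpose {h : ℕ} :
    Gamma (2*h) * (Gamma (2*h))ᵀ = (1/2 : ℂ) • Sig h := by
  ext i j
  have hi := i.isLt
  have hj := j.isLt
  have hh : 0 < h := by omega
  set ci := if (i:ℕ) < h then (i:ℕ) else (i:ℕ)-h with hcidef
  set cj := if (j:ℕ) < h then (j:ℕ) else (j:ℕ)-h with hcjdef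
  have hci := ci_spec i
  have hcj := ci_spec j
  rw [← hcidef] at hci
  rw [← hcjdef] at hcj
  have hci' : ci < h := by omega
  rw [Matrix.mul_apply]
  rw [sum_two _ (⟨2*ci, by omega⟩ : Fin (2*h)) (⟨2*ci+1, by omega⟩ : Fin (2*h))
    (by simp [Fin.ext_iff])]
  · simp only [transpose_apply]
    rw [Gamma_apply' i _ ci hci, Gamma_apply' i _ ci hci,
      Gamma_apply' j _ cj hcj, Gamma_apply' j _ cj hcj]
    simp only [Sig, Matrix.smul_apply, of_apply, smul_eq_mul]
    split_ifs <;>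
      first
        | omega
        | (linear_combination (1/4 : ℂ) * Complex.I_mul_I)
        | (linear_combination (-(1/4) : ℂ) * Complex.I_mul_I)
        | ring
  · intro c hc1 hc2
    simp only [ne_eq, Fin.ext_iff] at hc1 hc2
    rw [Gamma_apply' i _ ci hci]
    rw [if_neg (by omega), if_neg (by omega), zero_mul]

lemma GammaTheta_apply' {h : ℕ} (i k : Fin (2*h)) (ci : ℕ)
    (hci : ((i:ℕ) < h ∧ ci = (i:ℕ)) ∨ (h ≤ (i:ℕ) ∧ ci = (i:ℕ) - h)) :
    (Gamma (2*h) * Theta ℂ (2*h)) i k =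
      if (k:ℕ) = 2*ci then (if (i:ℕ) < h then -(Complex.I/2) else Complex.I/2)
      else if (k:ℕ) = 2*ci+1 then (1/2 : ℂ)
      else 0 := by
  have hi := i.isLt
  have hk := k.isLt
  have hci' : ci < h := by omega
  rw [Matrix.mul_apply]
  rw [sum_two _ (⟨2*ci, by omega⟩ : Fin (2*h)) (⟨2*ci+1, by omega⟩ : Fin (2*h))
    (by simp [Fin.ext_iff])]
  · rw [Gamma_apply' i _ ci hci, Gamma_apply' i _ ci hci]
    have hT1 : Theta ℂ (2*h) ⟨2*ci, by omega⟩ k = if (k:ℕ) = 2*ci+1 then 1 else 0 := by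
      simp only [Theta, of_apply, Fin.mk_val]
      split_ifs <;> first | rfl | omega
    have hT2 : Theta ℂ (2*h) ⟨2*ci+1, by omega⟩ k = if (k:ℕ) = 2*ci then -1 else 0 := by
      simp only [Theta, of_apply, Fin.mk_val]
      split_ifs <;> first | rfl | omega
    rw [hT1, hT2]
    simp only [Fin.mk_val, if_true]
    split_ifs <;> first | omega | ring
  · intro c hc1 hc2
    simp only [ne_eq, Fin.ext_iff] at hc1 hc2
    rw [Gamma_apply' i _ ci hci]
    rw [if_neg (by omega), if_neg (by omega), zero_mul]

lemma Gamma_mul_Theta_mul_Gamma_transpose {h : ℕ} :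
    Gamma (2*h) * Theta ℂ (2*h) * (Gamma (2*h))ᵀ = (-(Complex.I)/2) • Om h := by
  ext i j
  have hi := i.isLt
  have hj := j.isLt
  have hh : 0 < h := by omega
  set ci := if (i:ℕ) < h then (i:ℕ) else (i:ℕ)-h with hcidef
  set cj := if (j:ℕ) < h then (j:ℕ) else (j:ℕ)-h with hcjdef
  have hci := ci_spec i
  have hcj := ci_spec j
  rw [← hcidef] at hci
  rw [← hcjdef] at hcj
  have hci' : ci < h := by omega
  rw [Matrix.mul_apply]
  rw [sum_two _ (⟨2*ci, by omega⟩ : Fin (2*h)) (⟨2*ci+1, by omega⟩ : Fin (2*h))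
    (by simp [Fin.ext_iff])]
  · simp only [transpose_apply]
    rw [GammaTheta_apply' i _ ci hci, GammaTheta_apply' i _ ci hci,
      Gamma_apply' j _ cj hcj, Gamma_apply' j _ cj hcj]
    simp only [Om, Matrix.smul_apply, of_apply, smul_eq_mul, Fin.mk_val, if_true]
    split_ifs <;>
      first
        | omega
        | (linear_combination (1/4 : ℂ) * Complex.I_mul_I)
        | (linear_combination (-(1/4) : ℂ) * Complex.I_mul_I)
        | ring
  · intro c hc1 hc2
    simp only [ne_eq, Fin.ext_iff] at hc1 hc2
    rw [GammaTheta_apply' i _ ci hci]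
    rw [if_neg (by omega), if_neg (by omega), zero_mul]

lemma Sig_mul_conj_Gamma {h : ℕ} :
    Sig h * (Gamma (2*h)).map (starRingEnd ℂ) = Gamma (2*h) := by
  ext i j
  have hi := i.isLt
  have hj := j.isLt
  have hh : 0 < h := by omega
  set ci := if (i:ℕ) < h then (i:ℕ) else (i:ℕ)-h with hcidef
  have hci := ci_spec i
  rw [← hcidef] at hci
  have hci' : ci < h := by omega
  have hτ : (if (i:ℕ) < h then (i:ℕ)+h else (i:ℕ)-h) < 2*h := by split_ifs <;> omega
  rw [Matrix.mul_apply, Fintype.sum_eq_single (⟨_, hτ⟩ : Fin (2*h))]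
  · have hS : Sig h i ⟨_, hτ⟩ = 1 := by
      simp only [Sig, of_apply]
      rw [if_pos]
      split_ifs <;> omega
    rw [hS, one_mul, Matrix.map_apply]
    have hciτ : ((⟨_, hτ⟩ : Fin (2*h)):ℕ) < h ∧ ci = ((⟨_, hτ⟩ : Fin (2*h)):ℕ)
        ∨ h ≤ ((⟨_, hτ⟩ : Fin (2*h)):ℕ) ∧ ci = ((⟨_, hτ⟩ : Fin (2*h)):ℕ) - h := by
      simp only [Fin.mk_val]
      split_ifs <;> omega
    rw [Gamma_apply' _ j ci hciτ, Gamma_apply' i j ci hci]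
    simp only [Fin.mk_val]
    split_ifs <;>
      first
        | omega
        | (simp [map_div₀, Complex.conj_I, Complex.conj_ofNat]; try ring)
  · intro b hb
    have h0 : Sig h i b = 0 := by
      simp only [Sig, of_apply]
      rw [if_neg]
      simp only [ne_eq, Fin.ext_iff] at hb
      rintro (hc | hc) <;> (apply hb; split_ifs <;> omega)
    rw [h0, zero_mul]

lemma hconcat_mul_transpose {n h : ℕ} (X Y Z W : Matrix (Fin n) (Fin h) ℂ) :
    hconcat X Y * (hconcat Z W)ᵀ = X * Zᵀ + Y * Wᵀ := by
  ext i j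
  rw [Matrix.mul_apply, Matrix.add_apply, Matrix.mul_apply, Matrix.mul_apply, sum_split]
  congr 1 <;> refine Finset.sum_congr rfl fun c _ => ?_
  · simp only [hconcat, transpose_apply, of_apply, Fin.mk_val]
    rw [dif_pos c.isLt, dif_pos c.isLt]
  · simp only [hconcat, transpose_apply, of_apply, Fin.mk_val]
    rw [dif_neg (by omega), dif_neg (by omega)]
    simp [Nat.add_sub_cancel_left]

lemma hconcat_mul_Sig {n h : ℕ} (X Y : Matrix (Fin n) (Fin h) ℂ) :
    hconcat X Y * Sig h = hconcat Y X := by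
  ext i j
  have hj := j.isLt
  by_cases hc : (j:ℕ) < h
  · rw [Matrix.mul_apply, Fintype.sum_eq_single (⟨(j:ℕ)+h, by omega⟩ : Fin (2*h))]
    · have hS : Sig h ⟨(j:ℕ)+h, by omega⟩ j = 1 := by
        simp only [Sig, of_apply, Fin.mk_val]
        simp
      rw [hS, mul_one]
      simp only [hconcat, of_apply, Fin.mk_val]
      rw [dif_neg (by omega), dif_pos hc]
      congr 1
      apply Fin.ext
      simp
    · intro b hb
      have h0 : Sig h b j = 0 := by
        simp only [ne_eq, Fin.ext_iff, Fin.mk_val] at hb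
        simp only [Sig, of_apply]
        rw [if_neg (by omega)]
      rw [h0, mul_zero]
  · rw [Matrix.mul_apply, Fintype.sum_eq_single (⟨(j:ℕ)-h, by omega⟩ : Fin (2*h))]
    · have hS : Sig h ⟨(j:ℕ)-h, by omega⟩ j = 1 := by
        simp only [Sig, of_apply, Fin.mk_val]
        rw [if_pos (Or.inl (by omega))]
      rw [hS, mul_one]
      simp only [hconcat, of_apply, Fin.mk_val]
      rw [dif_pos (by omega), dif_neg hc]
    · intro b hb
      have h0 : Sig h b j = 0 := by
        simp only [ne_eq, Fin.ext_iff, Fin.mk_val] at hb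
        simp only [Sig, of_apply]
        rw [if_neg (by omega)]
      rw [h0, mul_zero]

lemma hconcat_mul_Om {n h : ℕ} (X Y : Matrix (Fin n) (Fin h) ℂ) :
    hconcat X Y * Om h = hconcat (-Y) X := by
  ext i j
  have hj := j.isLt
  by_cases hc : (j:ℕ) < h
  · rw [Matrix.mul_apply, Fintype.sum_eq_single (⟨(j:ℕ)+h, by omega⟩ : Fin (2*h))]
    · have hO : Om h ⟨(j:ℕ)+h, by omega⟩ j = -1 := by
        simp only [Om, of_apply, Fin.mk_val]
        rw [if_neg (by omega)]
        simp
      rw [hO, mul_neg_one]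
      simp only [hconcat, of_apply, Fin.mk_val, Matrix.neg_apply]
      rw [dif_neg (by omega), dif_pos hc]
      congr 2
      apply Fin.ext
      simp
    · intro b hb
      have h0 : Om h b j = 0 := by
        simp only [ne_eq, Fin.ext_iff, Fin.mk_val] at hb
        simp only [Om, of_apply]
        rw [if_neg (by omega), if_neg (by omega)]
      rw [h0, mul_zero]
  · rw [Matrix.mul_apply, Fintype.sum_eq_single (⟨(j:ℕ)-h, by omega⟩ : Fin (2*h))]
    · have hO : Om h ⟨(j:ℕ)-h, by omega⟩ j = 1 := by
        simp only [Om, of_apply, Fin.mk_val]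
        rw [if_pos (by omega)]
      rw [hO, mul_one]
      simp only [hconcat, of_apply, Fin.mk_val]
      rw [dif_pos (by omega), dif_neg hc]
    · intro b hb
      have h0 : Om h b j = 0 := by
        simp only [ne_eq, Fin.ext_iff, Fin.mk_val] at hb
        simp only [Om, of_apply]
        rw [if_neg (by omega), if_neg (by omega)]
      rw [h0, mul_zero]

lemma hconcat_neg {n h : ℕ} (X Y : Matrix (Fin n) (Fin h) ℂ) :
    hconcat (-X) (-Y) = -(hconcat X Y) := by
  ext i j
  simp only [hconcat, of_apply, Matrix.neg_apply]
  split_ifs <;> rfl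

lemma hconcat_map {n h : ℕ} (X Y : Matrix (Fin n) (Fin h) ℂ) (f : ℂ → ℂ) :
    (hconcat X Y).map f = hconcat (X.map f) (Y.map f) := by
  ext i j
  simp only [hconcat, Matrix.map_apply, of_apply]
  split_ifs <;> rfl

lemma cmap_add {m n : Type*} (A B : Matrix m n ℝ) : cmap (A+B) = cmap A + cmap B := by
  ext i j; simp [cmap]

lemma cmap_sub {m n : Type*} (A B : Matrix m n ℝ) : cmap (A-B) = cmap A - cmap B := by
  ext i j; simp [cmap]

lemma cmap_neg {m n : Type*} (A : Matrix m n ℝ) : cmap (-A) = -cmap A := by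
  ext i j; simp [cmap]

lemma cmap_transpose {m n : Type*} (A : Matrix m n ℝ) : cmap Aᵀ = (cmap A)ᵀ := rfl

lemma cmap_mul {m n p : Type*} [Fintype n] (A : Matrix m n ℝ) (B : Matrix n p ℝ) :
    cmap (A*B) = cmap A * cmap B := by
  ext i j
  simp [cmap, Matrix.mul_apply]

lemma cmap_conjTranspose {m n : Type*} (A : Matrix m n ℝ) : (cmap A)ᴴ = (cmap A)ᵀ := by
  ext i j
  simp [cmap, conjTranspose_apply, Complex.conj_ofReal]

lemma cmap_conj {m n : Type*} (A : Matrix m n ℝ) :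
    (cmap A).map (starRingEnd ℂ) = cmap A := by
  ext i j
  simp [cmap, Complex.conj_ofReal]

lemma conjM_mul {m n p : Type*} [Fintype n] (A : Matrix m n ℂ) (B : Matrix n p ℂ) :
    (A*B).map (starRingEnd ℂ) = A.map (starRingEnd ℂ) * B.map (starRingEnd ℂ) := by
  ext i j
  simp [Matrix.mul_apply, Matrix.map_apply]

lemma conjM_smul {m n : Type*} (c : ℂ) (A : Matrix m n ℂ) :
    (c • A).map (starRingEnd ℂ) = (starRingEnd ℂ c) • A.map (starRingEnd ℂ) := by
  ext i j
  simp [Matrix.map_apply]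

lemma conjTranspose_eq_conj_transpose {m n : Type*} (A : Matrix m n ℂ) :
    (Aᴴ)ᵀ = A.map (starRingEnd ℂ) := by
  ext i j
  simp [Matrix.map_apply, conjTranspose_apply]

lemma transpose_eq_conj {m n : Type*} (A : Matrix m n ℂ) :
    (Aᴴ) = (A.map (starRingEnd ℂ))ᵀ := by
  ext i j
  simp [Matrix.map_apply, conjTranspose_apply]

lemma cmapTH {m n : Type*} (A : Matrix m n ℝ) : ((cmap A)ᵀ)ᴴ = cmap A := by
  ext i j
  simp [cmap, conjTranspose_apply, Complex.conj_ofReal]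

lemma pad_factor {n h : ℕ} (hnh : n ≤ h) (Bm : Matrix (Fin n) (Fin n) ℂ) :
    ∃ Λ : Matrix (Fin h) (Fin n) ℂ, Λᴴ * Λ = Bmᴴ * Bm := by
  classical
  set Λ : Matrix (Fin h) (Fin n) ℂ :=
    Matrix.of (fun i j => if hi : (i:ℕ) < n then Bm ⟨i,hi⟩ j else 0) with hΛdef
  refine ⟨Λ, ?_⟩
  ext i j
  rw [Matrix.mul_apply, Matrix.mul_apply]
  set emb : Fin n ↪ Fin h :=
    ⟨fun k => ⟨(k:ℕ), lt_of_lt_of_le k.isLt hnh⟩, by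
      intro a b hab
      simpa [Fin.ext_iff] using congrArg Fin.val hab⟩ with hembdef
  have hsub : (∑ k : Fin h, Λᴴ i k * Λ k j)
      = ∑ k ∈ Finset.univ.map emb, Λᴴ i k * Λ k j := by
    refine (Finset.sum_subset (Finset.subset_univ _) (fun x _ hx => ?_)).symm
    have hxn : ¬ (x:ℕ) < n := by
      intro hlt
      apply hx
      simp only [Finset.mem_map, Finset.mem_univ, true_and]
      exact ⟨⟨(x:ℕ), hlt⟩, by apply Fin.ext; rfl⟩
    have : Λ x j = 0 := by simp [hΛdef, hxn]
    rw [this, mul_zero]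
  rw [hsub, Finset.sum_map]
  refine Finset.sum_congr rfl fun k _ => ?_
  simp [hΛdef, conjTranspose_apply, show ((emb k : Fin h) : ℕ) = k from rfl]

/-- Matrix-algebraic core of the paper's Theorem 2: the Hermitian matrix `N`
is positive semidefinite iff it factors as `Λ_o†·Λ_o`, and for any such `Λ_o` the matrix
`B_o = 2i·Θ·[−Λ_o† Λ_oᵀ]·Γ_{w_o}` is real and simultaneously satisfies the
covariance-matching and physical-realizability equations. -/
theorem cmt_observer_noise_construction
    (n yp wp h : ℕ)
    (hn : Even n) (hn0 : 0 < n) (hyp : Even yp) (hyp0 : 0 < yp)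
    (hwp : Even wp) (hwp0 : 0 < wp) (hh0 : 0 < h) (hwo : 2 * n ≤ 2 * h)
    (Ap : Matrix (Fin n) (Fin n) ℝ) (Cp : Matrix (Fin yp) (Fin n) ℝ)
    (K : Matrix (Fin n) (Fin yp) ℝ) (Bp : Matrix (Fin n) (Fin wp) ℝ)
    (X : Matrix (Fin n) (Fin n) ℝ)
    (N : Matrix (Fin n) (Fin n) ℂ)
    (hN : N =
      -(Complex.I / 4) • (Theta ℂ n * cmap (Ap - K * Cp))
      - (Complex.I / 4) • ((cmap (Ap - K * Cp))ᵀ * Theta ℂ n)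
      + (Complex.I / 4) • (Theta ℂ n * cmap K * Theta ℂ yp * (cmap K)ᵀ * Theta ℂ n)
      - (1 / 4 : ℂ) • (Theta ℂ n * cmap K * cmap Cp * cmap X * Theta ℂ n)
      - (1 / 4 : ℂ) • (Theta ℂ n * (cmap X)ᵀ * (cmap K * cmap Cp)ᵀ * Theta ℂ n)
      - (1 / 4 : ℂ) • (Theta ℂ n * cmap Bp * (cmap Bp)ᵀ * Theta ℂ n)
      + (1 / 4 : ℂ) • (Theta ℂ n * cmap K * (cmap K)ᵀ * Theta ℂ n)) :
    N.IsHermitian ∧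
    (N.PosSemidef ↔ ∃ Λ : Matrix (Fin h) (Fin n) ℂ, Λᴴ * Λ = N) ∧
    (∀ Λ : Matrix (Fin h) (Fin n) ℂ, Λᴴ * Λ = N →
      ∀ B : Matrix (Fin n) (Fin (2 * h)) ℂ,
        B = (2 * Complex.I) • (Theta ℂ n * hconcat (-Λᴴ) Λᵀ * Gamma (2 * h)) →
        (∀ i j, (B i j).im = 0) ∧
        B * Bᵀ = cmap (K * Cp * X + Xᵀ * (K * Cp)ᵀ + Bp * Bpᵀ - K * Kᵀ) ∧
        B * Theta ℂ (2 * h) * Bᵀ =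
          cmap (-((Ap - K * Cp) * Theta ℝ n) - Theta ℝ n * (Ap - K * Cp)ᵀ
            - K * Theta ℝ yp * Kᵀ)) := by
  have hΘΘ : Theta ℂ n * Theta ℂ n = -1 := theta_mul_theta hn
  have hred : ∀ M : Matrix (Fin n) (Fin n) ℂ, Theta ℂ n * (Theta ℂ n * M) = -M := by
    intro M; rw [← Matrix.mul_assoc, hΘΘ, neg_one_mul]
  -- Hermitian
  have herm : N.IsHermitian := by
    show Nᴴ = N
    nth_rewrite 2 [hN]
    rw [hN]
    simp only [conjTranspose_sub, conjTranspose_add, conjTranspose_smul, conjTranspose_mul,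
      conjTranspose_neg, cmap_conjTranspose, cmapTH, theta_conjTranspose, transpose_mul,
      Matrix.mul_neg, Matrix.neg_mul, neg_neg, smul_neg, star_smul, Complex.star_def,
      map_neg, map_div₀, Complex.conj_I, Complex.conj_ofNat, _root_.map_one, map_ofNat,
      Matrix.mul_assoc]
    module
  refine ⟨herm, ?_, ?_⟩
  · -- PSD iff factorization
    constructor
    · intro hpsd
      obtain ⟨Bm, hBm⟩ : ∃ Bm : Matrix (Fin n) (Fin n) ℂ, N = Bmᴴ * Bm := by
        classical
        open scoped MatrixOrder Matrix.Norms.L2Operator in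
        exact CStarAlgebra.nonneg_iff_eq_star_mul_self.mp hpsd.nonneg
      obtain ⟨Λ, hΛeq⟩ := pad_factor (show n ≤ h by omega) Bm
      exact ⟨Λ, by rw [hΛeq, ← hBm]⟩
    · rintro ⟨Λ, hΛ⟩
      exact hΛ ▸ Matrix.posSemidef_conjTranspose_mul_self Λ
  · intro Λ hΛ B hB
    -- abbreviations
    have hΘT : (Theta ℂ n)ᵀ = -(Theta ℂ n) := theta_transpose n
    set Θ := Theta ℂ n
    set L := hconcat (-Λᴴ) Λᵀ with hLdef
    set G := Gamma (2*h) with hGdef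
    -- transposed factorization
    have hΛT : Λᵀ * (Λᴴ)ᵀ = Nᵀ := by rw [← transpose_mul, hΛ]
    -- the two sandwich identities
    have hLSL : L * Sig h * Lᵀ = -(Nᵀ) - N := by
      rw [hLdef, hconcat_mul_Sig, hconcat_mul_transpose]
      rw [transpose_neg, transpose_transpose, Matrix.mul_neg, hΛT, Matrix.neg_mul, hΛ]
      abel
    have hLOL : L * Om h * Lᵀ = Nᵀ - N := by
      rw [hLdef, hconcat_mul_Om, hconcat_mul_transpose]
      rw [transpose_neg, transpose_transpose, Matrix.neg_mul, Matrix.mul_neg, neg_neg, hΛT,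
        Matrix.neg_mul, hΛ]
      abel
    -- Bᵀ
    have hBT : Bᵀ = (2 * Complex.I) • (Gᵀ * (Lᵀ * Θᵀ)) := by
      rw [hB, transpose_smul, transpose_mul, transpose_mul]
    -- key scalar facts
    have hs1 : (2 * Complex.I) * (2 * Complex.I) * (1/2 : ℂ) = -2 := by
      linear_combination (2:ℂ) * Complex.I_mul_I
    -- reality
    have hreal : B.map (starRingEnd ℂ) = B := by
      have hLc : L.map (starRingEnd ℂ) = -(L * Sig h) := by
        have hm1 : (-Λᴴ).map (starRingEnd ℂ) = -Λᵀ := by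
          ext i j
          simp [Matrix.map_apply, conjTranspose_apply]
        have hm2 : (Λᵀ).map (starRingEnd ℂ) = Λᴴ := by
          ext i j
          simp [Matrix.map_apply, conjTranspose_apply]
        rw [hLdef, hconcat_map, hm1, hm2, hconcat_mul_Sig, ← hconcat_neg, neg_neg]
      rw [hB, conjM_smul, conjM_mul, conjM_mul, theta_conj, hLc]
      rw [Matrix.mul_neg, Matrix.neg_mul, Matrix.mul_assoc, Matrix.mul_assoc,
        Sig_mul_conj_Gamma, ← Matrix.mul_assoc]
      have : (starRingEnd ℂ) (2 * Complex.I) = -(2 * Complex.I) := by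
        simp [Complex.conj_I, Complex.conj_ofNat]
      rw [this, neg_smul, smul_neg, neg_neg]
    refine ⟨?_, ?_, ?_⟩
    · intro i j
      have := congrFun (congrFun hreal i) j
      simp only [Matrix.map_apply] at this
      exact (Complex.conj_eq_iff_im).mp this
    · -- covariance equation
      have keyA : (-2 : ℂ) • (Θ * (-(Nᵀ) - N) * Θᵀ)
          = cmap (K * Cp * X + Xᵀ * (K * Cp)ᵀ + Bp * Bpᵀ - K * Kᵀ) := by
        rw [hN, hΘT]
        simp only [transpose_add, transpose_sub, transpose_smul, transpose_mul, transpose_neg,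
          transpose_transpose, theta_transpose, hΘT, cmap_sub, cmap_add, cmap_mul, cmap_transpose,
          Matrix.mul_add, Matrix.add_mul, Matrix.mul_sub, Matrix.sub_mul, Matrix.mul_neg,
          Matrix.neg_mul, neg_neg, smul_neg, neg_smul, Matrix.mul_smul, Matrix.smul_mul,
          Matrix.mul_assoc, hred, hΘΘ, mul_neg_one, Matrix.mul_one]
        module
      calc B * Bᵀ
          = ((2 * Complex.I) * (2 * Complex.I)) • ((Θ * L * G) * (Gᵀ * (Lᵀ * Θᵀ))) := by
            rw [hBT, hB, Matrix.smul_mul, Matrix.mul_smul, smul_smul]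
        _ = ((2 * Complex.I) * (2 * Complex.I)) • ((1/2 : ℂ) • (Θ * (L * Sig h * Lᵀ) * Θᵀ)) := by
            congr 1
            rw [← Matrix.mul_assoc (Θ * L * G) Gᵀ (Lᵀ * Θᵀ),
              Matrix.mul_assoc (Θ * L) G Gᵀ, hGdef, Gamma_mul_Gamma_transpose,
              Matrix.mul_smul, Matrix.smul_mul]
            congr 1
            rw [Matrix.mul_assoc Θ L (Sig h), ← Matrix.mul_assoc (Θ * (L * Sig h)) Lᵀ Θᵀ,
              Matrix.mul_assoc Θ (L * Sig h) Lᵀ, Matrix.mul_assoc L (Sig h) Lᵀ,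
              ← Matrix.mul_assoc L (Sig h) Lᵀ]
        _ = (-2 : ℂ) • (Θ * (-(Nᵀ) - N) * Θᵀ) := by
            rw [hLSL, smul_smul, hs1]
        _ = cmap (K * Cp * X + Xᵀ * (K * Cp)ᵀ + Bp * Bpᵀ - K * Kᵀ) := keyA
    · -- physical realizability equation
      have hs2 : (2 * Complex.I) * (2 * Complex.I) * (-(Complex.I)/2) = 2 * Complex.I := by
        linear_combination (-2 * Complex.I : ℂ) * Complex.I_mul_I
      have keyB : Θ * (Nᵀ - N) * Θᵀ
          = (-(Complex.I)/2 : ℂ) • cmap (-((Ap - K * Cp) * Theta ℝ n) - Theta ℝ n * (Ap - K * Cp)ᵀ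
              - K * Theta ℝ yp * Kᵀ) := by
        rw [hN, hΘT]
        simp only [transpose_add, transpose_sub, transpose_smul, transpose_mul, transpose_neg,
          transpose_transpose, theta_transpose, hΘT, cmap_sub, cmap_add, cmap_mul, cmap_neg,
          cmap_transpose, cmap_theta,
          Matrix.mul_add, Matrix.add_mul, Matrix.mul_sub, Matrix.sub_mul, Matrix.mul_neg,
          Matrix.neg_mul, neg_neg, smul_neg, neg_smul, Matrix.mul_smul, Matrix.smul_mul,
          Matrix.mul_assoc, hred, hΘΘ, mul_neg_one, Matrix.mul_one]
        module
      calc B * Theta ℂ (2*h) * Bᵀ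
          = ((2 * Complex.I) * (2 * Complex.I)) •
              ((Θ * L * G) * Theta ℂ (2*h) * (Gᵀ * (Lᵀ * Θᵀ))) := by
            rw [hBT, hB, Matrix.smul_mul, Matrix.smul_mul, Matrix.mul_smul, smul_smul]
        _ = ((2 * Complex.I) * (2 * Complex.I)) •
              ((-(Complex.I)/2 : ℂ) • (Θ * (L * Om h * Lᵀ) * Θᵀ)) := by
            congr 1
            rw [Matrix.mul_assoc (Θ * L) G (Theta ℂ (2*h)),
              ← Matrix.mul_assoc (Θ * L * (G * Theta ℂ (2*h))) Gᵀ (Lᵀ * Θᵀ),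
              Matrix.mul_assoc (Θ * L) (G * Theta ℂ (2*h)) Gᵀ, hGdef,
              Gamma_mul_Theta_mul_Gamma_transpose,
              Matrix.mul_smul, Matrix.smul_mul]
            congr 1
            rw [Matrix.mul_assoc Θ L (Om h), ← Matrix.mul_assoc (Θ * (L * Om h)) Lᵀ Θᵀ,
              Matrix.mul_assoc Θ (L * Om h) Lᵀ, Matrix.mul_assoc L (Om h) Lᵀ,
              ← Matrix.mul_assoc L (Om h) Lᵀ]
        _ = (2 * Complex.I : ℂ) • (Θ * (Nᵀ - N) * Θᵀ) := by
            rw [hLOL, smul_smul, hs2]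
        _ = cmap (-((Ap - K * Cp) * Theta ℝ n) - Theta ℝ n * (Ap - K * Cp)ᵀ
              - K * Theta ℝ yp * Kᵀ) := by
            rw [keyB, smul_smul, show (2 * Complex.I) * (-(Complex.I)/2) = 1 by
              linear_combination -Complex.I_mul_I, one_smul]
end
end

section
/- Let n, y_p, w_p, w_o be positive even integers, let A_p (n×n), C_p (y_p×n), K (n×y_p), B_p (n×w_p), B_o (n×w_o) be real matrices, D_p = [I_{y_p} 0] (y_p×w_p), and set A = [[A_p, 0],[K·C_p, A_p − K·C_p]], B = [[B_p, 0],[K·D_p, B_o]]. Suppose the symmetric 2n×2n real matrix Σ = [[Σ_p, Σ_po],[Σ_poᵀ, Σ_o]] (with n×n blocks) satisfies the Lyapunov equation A·Σ + Σ·Aᵀ + B·Bᵀ = 0. Then X := Σ_p − Σ_po satisfies the Sylvester equation A_p·X + X·(A_p − K·C_p)ᵀ + B_p·B_pᵀ − B_p·D_pᵀ·Kᵀ = 0. -/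
open Matrix MeasureTheory Filter
open scoped Kronecker

noncomputable section

/-- The Sylvester equation (Eq. (22)) for `X = Σ_p − Σ_po` derived from the
joint plant–observer Lyapunov equation in steady state. -/
theorem sylvester_equation_for_Sigp_sub_Sigpo
    (n yp wp wo : ℕ)
    (hn : Even n) (hn0 : 0 < n) (hyp : Even yp) (hyp0 : 0 < yp)
    (hwp : Even wp) (hwp0 : 0 < wp) (hwo : Even wo) (hwo0 : 0 < wo)
    (hypwp : yp ≤ wp)
    (Ap : Matrix (Fin n) (Fin n) ℝ) (Cp : Matrix (Fin yp) (Fin n) ℝ)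
    (K : Matrix (Fin n) (Fin yp) ℝ) (Bp : Matrix (Fin n) (Fin wp) ℝ)
    (Bo : Matrix (Fin n) (Fin wo) ℝ)
    (Dp : Matrix (Fin yp) (Fin wp) ℝ)
    (hDp : Dp = Matrix.of fun (i : Fin yp) (j : Fin wp) =>
      if (j : ℕ) = (i : ℕ) then (1 : ℝ) else 0)
    (A : Matrix (Fin n ⊕ Fin n) (Fin n ⊕ Fin n) ℝ)
    (hA : A = Matrix.fromBlocks Ap 0 (K * Cp) (Ap - K * Cp))
    (B : Matrix (Fin n ⊕ Fin n) (Fin wp ⊕ Fin wo) ℝ)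
    (hB : B = Matrix.fromBlocks Bp 0 (K * Dp) Bo)
    (Sigp Sigpo Sigo : Matrix (Fin n) (Fin n) ℝ)
    (hSigp : Sigp.IsSymm) (hSigo : Sigo.IsSymm)
    (Sig : Matrix (Fin n ⊕ Fin n) (Fin n ⊕ Fin n) ℝ)
    (hSig : Sig = Matrix.fromBlocks Sigp Sigpo Sigpoᵀ Sigo)
    (hLyap : A * Sig + Sig * Aᵀ + B * Bᵀ = 0) :
    Ap * (Sigp - Sigpo) + (Sigp - Sigpo) * (Ap - K * Cp)ᵀ
      + Bp * Bpᵀ - Bp * Dpᵀ * Kᵀ = 0 := by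
  subst hA hB hSig
  rw [← Matrix.fromBlocks_zero, Matrix.fromBlocks_transpose, Matrix.fromBlocks_transpose,
    Matrix.fromBlocks_multiply, Matrix.fromBlocks_multiply, Matrix.fromBlocks_multiply, Matrix.fromBlocks_add,
    Matrix.fromBlocks_add, Matrix.fromBlocks_inj] at hLyap
  obtain ⟨e11, e12, -, -⟩ := hLyap
  have key : Ap * (Sigp - Sigpo) + (Sigp - Sigpo) * (Ap - K * Cp)ᵀ
      + Bp * Bpᵀ - Bp * Dpᵀ * Kᵀ
      = (Ap * Sigp + (0 : Matrix (Fin n) (Fin n) ℝ) * Sigpoᵀ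
          + (Sigp * Apᵀ + Sigpo * (0 : Matrix (Fin n) (Fin n) ℝ)ᵀ)
          + (Bp * Bpᵀ + (0 : Matrix (Fin n) (Fin wo) ℝ) * (0 : Matrix (Fin n) (Fin wo) ℝ)ᵀ))
      - (Ap * Sigpo + (0 : Matrix (Fin n) (Fin n) ℝ) * Sigo
          + (Sigp * (K * Cp)ᵀ + Sigpo * (Ap - K * Cp)ᵀ)
          + (Bp * (K * Dp)ᵀ + (0 : Matrix (Fin n) (Fin wo) ℝ) * Boᵀ)) := by
    simp only [Matrix.transpose_sub, Matrix.transpose_mul, Matrix.zero_mul,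
      Matrix.transpose_zero, Matrix.mul_zero, Matrix.mul_sub, Matrix.sub_mul]
    noncomm_ring
    simp only [Matrix.mul_assoc]
  rw [key, e11, e12, sub_zero]
end
end

section
/- Let A be an n×n real Hurwitz matrix and Q an n×n real matrix. For any initial condition Σ₀, the solution Σ(t) of the matrix differential equation Σ'(t) = A·Σ(t) + Σ(t)·Aᵀ + Q with Σ(0) = Σ₀ converges entrywise, as t → ∞, to X∞ := ∫₀^∞ exp(sA)·Q·exp(sAᵀ) ds, which is the unique solution of A·X + X·Aᵀ + Q = 0; in particular, the limit is independent of Σ₀. -/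
open Matrix MeasureTheory Filter
open scoped Kronecker

noncomputable section

section LyapunovAux
open NormedSpace
open scoped ENNReal NNReal


section Gelfand
variable {Al : Type*} [NormedRing Al] [NormedAlgebra ℂ Al] [CompleteSpace Al]

/-- geometric decay of powers from spectral radius bound -/
lemma pow_decay (a : Al) {r : ℝ≥0} (hr0 : 0 < r)
    (hs : spectralRadius ℂ a < (r : ℝ≥0∞)) :
    ∃ C : ℝ, 0 < C ∧ ∀ k : ℕ, ‖a ^ k‖ ≤ C * (r : ℝ) ^ k := by
  have h := spectrum.pow_nnnorm_pow_one_div_tendsto_nhds_spectralRadius a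
  have hev : ∀ᶠ k : ℕ in atTop, (‖a ^ k‖₊ : ℝ≥0∞) ^ (1 / (k:ℝ)) < (r : ℝ≥0∞) :=
    h.eventually_lt_const hs
  rw [eventually_atTop] at hev
  obtain ⟨N, hN⟩ := hev
  have key : ∀ k, N + 1 ≤ k → ‖a ^ k‖ ≤ (r : ℝ) ^ k := by
    intro k hk
    have hk1 : 1 ≤ k := le_trans (Nat.le_add_left 1 N) hk
    have h2 := hN k (le_trans (Nat.le_succ N) hk)
    have hkpos : (0:ℝ) < k := by positivity
    have h3 : ((‖a ^ k‖₊ : ℝ≥0∞) ^ (1 / (k:ℝ))) ^ (k:ℝ) ≤ ((r : ℝ≥0∞)) ^ (k:ℝ) :=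
      ENNReal.rpow_le_rpow h2.le (le_of_lt hkpos)
    rw [← ENNReal.rpow_mul, one_div, inv_mul_cancel₀ (ne_of_gt hkpos), ENNReal.rpow_one] at h3
    have h4 : (‖a ^ k‖₊ : ℝ≥0∞) ≤ (r : ℝ≥0∞) ^ (k:ℕ) := by
      rwa [← ENNReal.rpow_natCast]
    rw [← ENNReal.coe_pow, ENNReal.coe_le_coe] at h4
    calc ‖a ^ k‖ = ((‖a ^ k‖₊ : ℝ≥0) : ℝ) := rfl
    _ ≤ ((r ^ k : ℝ≥0) : ℝ) := by exact_mod_cast h4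
    _ = (r:ℝ) ^ k := by push_cast; ring
  classical
  set C₀ : ℝ := (Finset.range (N + 2)).sup' (by simp) (fun k => ‖a ^ k‖ / (r:ℝ) ^ k) with hC₀
  refine ⟨max C₀ 1, lt_of_lt_of_le one_pos (le_max_right _ _), fun k => ?_⟩
  have hrk : (0:ℝ) < (r:ℝ) ^ k := by positivity
  rcases le_or_gt k (N + 1) with hk | hk
  · have : ‖a ^ k‖ / (r:ℝ) ^ k ≤ C₀ := by
      rw [hC₀]
      exact Finset.le_sup' (fun k => ‖a ^ k‖ / (r:ℝ) ^ k) (Finset.mem_range.2 (Nat.lt_succ_of_le hk))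
    have := mul_le_mul_of_nonneg_right (this.trans (le_max_left C₀ 1)) hrk.le
    rwa [div_mul_cancel₀ _ hrk.ne'] at this
  · calc ‖a ^ k‖ ≤ (r:ℝ) ^ k := key k hk.le
    _ ≤ max C₀ 1 * (r:ℝ) ^ k := by nlinarith [le_max_right C₀ 1]
end Gelfand

section SpectralMatrix
variable {m : Type*} [Fintype m] [DecidableEq m] [Nonempty m]

attribute [local instance] Matrix.linftyOpNormedRing Matrix.linftyOpNormedAlgebra

/-- eigenvector existence -/
lemma eigvec_of_mem_spectrum {B : Matrix m m ℂ} {μ : ℂ} (h : μ ∈ spectrum ℂ B) :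
    ∃ v : m → ℂ, v ≠ 0 ∧ B *ᵥ v = μ • v := by
  rw [spectrum.mem_iff] at h
  rw [Matrix.isUnit_iff_isUnit_det, isUnit_iff_ne_zero, not_not] at h
  rw [← Matrix.exists_mulVec_eq_zero_iff] at h
  obtain ⟨v, hv, hv0⟩ := h
  refine ⟨v, hv, ?_⟩
  rw [Algebra.algebraMap_eq_smul_one, Matrix.sub_mulVec, Matrix.smul_mulVec,
    Matrix.one_mulVec, sub_eq_zero] at hv0
  exact hv0.symm

lemma pow_mulVec_eig {B : Matrix m m ℂ} {μ : ℂ} {v : m → ℂ} (h : B *ᵥ v = μ • v) (k : ℕ) :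
    B ^ k *ᵥ v = μ ^ k • v := by
  induction k with
  | zero => simp [Matrix.one_mulVec]
  | succ k ih =>
      rw [pow_succ, ← Matrix.mulVec_mulVec, h, Matrix.mulVec_smul, ih, smul_smul, pow_succ]
      ring_nf

/-- `exp B` acts on an eigenvector by `exp μ`. -/
lemma exp_mulVec_eig {B : Matrix m m ℂ} {μ : ℂ} {v : m → ℂ} (h : B *ᵥ v = μ • v) :
    exp B *ᵥ v = Complex.exp μ • v := by
  classical
  let L : Matrix m m ℂ →ₗ[ℂ] (m → ℂ) :=
    { toFun := fun M => M *ᵥ v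
      map_add' := fun M N => Matrix.add_mulVec M N v
      map_smul' := fun c M => Matrix.smul_mulVec c M v }
  have hsum : HasSum (fun n : ℕ => (n.factorial⁻¹ : ℂ) • B ^ n) (exp B) := by
    rw [exp_eq_tsum ℂ]
    exact (expSeries_summable' B).hasSum
  have hL := hsum.mapL L.toContinuousLinearMap
  have hLB : L.toContinuousLinearMap (exp B) = exp B *ᵥ v := rfl
  have hterm : ∀ n : ℕ, L.toContinuousLinearMap ((n.factorial⁻¹ : ℂ) • B ^ n)
      = ((n.factorial⁻¹ : ℂ) * μ ^ n) • v := by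
    intro n
    show L ((n.factorial⁻¹ : ℂ) • B ^ n) = _
    rw [_root_.map_smul]
    show (n.factorial⁻¹ : ℂ) • (B ^ n *ᵥ v) = _
    rw [pow_mulVec_eig h, smul_smul]
  rw [hLB] at hL
  rw [funext hterm] at hL
  have hexp : HasSum (fun n : ℕ => (n.factorial⁻¹ : ℂ) * μ ^ n) (Complex.exp μ) := by
    have h5 : HasSum (fun n : ℕ => (n.factorial⁻¹ : ℂ) • μ ^ n) (exp μ) := by
      rw [exp_eq_tsum ℂ]
      exact (expSeries_summable' μ).hasSum
    rw [Complex.exp_eq_exp_ℂ]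
    simpa [smul_eq_mul] using h5
  have := hexp.smul_const v
  exact hL.unique this

/-- polynomial acts on eigenvector by evaluation -/
lemma aeval_mulVec_eig {B : Matrix m m ℂ} {μ : ℂ} {v : m → ℂ} (h : B *ᵥ v = μ • v)
    (q : Polynomial ℂ) : (Polynomial.aeval B q) *ᵥ v = (q.eval μ) • v := by
  classical
  let L : Matrix m m ℂ →ₗ[ℂ] (m → ℂ) :=
    { toFun := fun M => M *ᵥ v
      map_add' := fun M N => Matrix.add_mulVec M N v
      map_smul' := fun c M => Matrix.smul_mulVec c M v }
  show L (Polynomial.aeval B q) = _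
  rw [Polynomial.aeval_eq_sum_range, map_sum]
  have : ∀ i ∈ Finset.range (q.natDegree + 1), L (q.coeff i • B ^ i) = (q.coeff i * μ ^ i) • v := by
    intro i _
    rw [_root_.map_smul]
    show q.coeff i • (B ^ i *ᵥ v) = _
    rw [pow_mulVec_eig h, smul_smul]
  rw [Finset.sum_congr rfl this, ← Finset.sum_smul, Polynomial.eval_eq_sum_range]

/-- `exp B` lies in the polynomial algebra generated by `B`. -/
lemma exp_mem_aeval_range (B : Matrix m m ℂ) :
    ∃ q : Polynomial ℂ, Polynomial.aeval B q = exp B := by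
  have hsum : HasSum (fun n : ℕ => (n.factorial⁻¹ : ℂ) • B ^ n) (exp B) := by
    rw [exp_eq_tsum ℂ]
    exact (expSeries_summable' B).hasSum
  have htd := hsum.tendsto_sum_nat
  have hclosed : IsClosed ((Subalgebra.toSubmodule (Algebra.adjoin ℂ {B}) : Submodule ℂ _) : Set (Matrix m m ℂ)) :=
    Submodule.closed_of_finiteDimensional _
  have hmem : exp B ∈ Algebra.adjoin ℂ {B} := by
    have : ∀ N : ℕ, (∑ n ∈ Finset.range N, (n.factorial⁻¹ : ℂ) • B ^ n) ∈ Algebra.adjoin ℂ {B} := by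
      intro N
      refine Subalgebra.sum_mem _ fun n _ => Subalgebra.smul_mem _ (Subalgebra.pow_mem _ ?_ n) _
      exact Algebra.subset_adjoin rfl
    exact hclosed.mem_of_tendsto htd (Filter.Eventually.of_forall this)
  rw [Algebra.adjoin_singleton_eq_range_aeval] at hmem
  obtain ⟨q, hq⟩ := hmem
  exact ⟨q, hq⟩

/-- spectral radius bound for `exp B` when `B` is "Hurwitz". -/
lemma spectralRadius_exp_lt (B : Matrix m m ℂ) (hB : ∀ μ ∈ spectrum ℂ B, μ.re < 0) :
    ∃ r : ℝ≥0, 0 < r ∧ (r : ℝ) < 1 ∧ spectralRadius ℂ (exp B) < (r : ℝ≥0∞) := by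
  obtain ⟨q, hq⟩ := exp_mem_aeval_range B
  have hnon : (spectrum ℂ B).Nonempty := spectrum.nonempty B
  obtain ⟨μ₀, hμ₀, hmax⟩ := (spectrum.isCompact B).exists_isMaxOn hnon
    (Complex.continuous_re.continuousOn)
  have hμ₀neg : μ₀.re < 0 := hB μ₀ hμ₀
  set r : ℝ≥0 := Real.toNNReal (Real.exp (μ₀.re / 2)) with hr
  have hrpos : 0 < r := by
    rw [hr]; exact Real.toNNReal_pos.2 (Real.exp_pos _)
  have hrval : (r : ℝ) = Real.exp (μ₀.re / 2) := Real.coe_toNNReal _ (Real.exp_pos _).le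
  have hr1 : (r : ℝ) < 1 := by
    rw [hrval, Real.exp_lt_one_iff]; linarith
  refine ⟨r, hrpos, hr1, ?_⟩
  apply spectrum.spectralRadius_lt_of_forall_lt
  intro z hz
  rw [← hq, spectrum.map_polynomial_aeval] at hz
  obtain ⟨μ, hμ, hzq⟩ := hz
  obtain ⟨v, hv, hvec⟩ := eigvec_of_mem_spectrum hμ
  have h1 := exp_mulVec_eig hvec
  have h2 := aeval_mulVec_eig hvec q
  rw [hq] at h2
  have : q.eval μ = Complex.exp μ := by
    have := h2.symm.trans h1
    have hd : (q.eval μ - Complex.exp μ) • v = 0 := by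
      rw [sub_smul, this, sub_self]
    rcases smul_eq_zero.1 hd with h | h
    · exact sub_eq_zero.1 h
    · exact absurd h hv
  rw [← hzq]
  show ‖q.eval μ‖₊ < r
  rw [← NNReal.coe_lt_coe, coe_nnnorm, this, hrval]
  have hle : μ.re ≤ μ₀.re := hmax hμ
  calc ‖Complex.exp μ‖ = Real.exp μ.re := by
        rw [Complex.norm_exp]
  _ < Real.exp (μ₀.re / 2) := by
        apply Real.exp_lt_exp.2; linarith

lemma entry_norm_le_linfty (M : Matrix m m ℂ) (i j : m) : ‖M i j‖ ≤ ‖M‖ := by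
  have h1 : ‖M i j‖₊ ≤ ∑ j' : m, ‖M i j'‖₊ :=
    Finset.single_le_sum (f := fun j' => ‖M i j'‖₊) (fun _ _ => zero_le) (Finset.mem_univ j)
  have h2 : (∑ j' : m, ‖M i j'‖₊) ≤ (Finset.univ : Finset m).sup fun i : m => ∑ j' : m, ‖M i j'‖₊ :=
    Finset.le_sup (f := fun i : m => ∑ j' : m, ‖M i j'‖₊) (Finset.mem_univ i)
  have := h1.trans h2
  rw [← Matrix.linfty_opNNNorm_def] at this
  exact_mod_cast this

/-- Exponential decay of `exp (t • B)` for Hurwitz complex matrices. -/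
lemma exp_smul_decay (B : Matrix m m ℂ) (hB : ∀ μ ∈ spectrum ℂ B, μ.re < 0) :
    ∃ C : ℝ, 0 < C ∧ ∃ a : ℝ, 0 < a ∧ ∀ t : ℝ, 0 ≤ t →
      ‖exp (t • B)‖ ≤ C * Real.exp (-a * t) := by
  obtain ⟨r, hr0, hr1, hrs⟩ := spectralRadius_exp_lt B hB
  obtain ⟨C₁, hC₁, hpow⟩ := pow_decay (exp B) hr0 hrs
  -- bound on [0,1]
  have hcont : Continuous fun s : ℝ => exp (s • B) :=
    exp_continuous.comp (continuous_id.smul continuous_const)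
  obtain ⟨M, hM⟩ := (isCompact_Icc (a := (0:ℝ)) (b := 1)).exists_bound_of_continuousOn
    hcont.continuousOn
  have hMpos : (0:ℝ) < max M 1 := lt_of_lt_of_le one_pos (le_max_right _ _)
  set a : ℝ := -Real.log r with ha
  have hrpos : (0:ℝ) < r := hr0
  have hloglt : Real.log r < 0 := Real.log_neg hrpos hr1
  have hapos : 0 < a := by rw [ha]; linarith
  refine ⟨C₁ * max M 1 / r, by positivity, a, hapos, fun t ht => ?_⟩
  set k : ℕ := ⌊t⌋₊ with hk
  have hkle : (k : ℝ) ≤ t := Nat.floor_le ht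
  have htlt : t < k + 1 := Nat.lt_floor_add_one t
  have hsplit : t • B = ((k:ℝ) • B) + ((t - k) • B) := by
    rw [← add_smul]; ring_nf
  have hcomm : Commute ((k:ℝ) • B) ((t - k) • B) :=
    ((Commute.refl B).smul_left _).smul_right _
  have hmul : exp (t • B) = exp ((k:ℝ) • B) * exp ((t - k) • B) := by
    rw [hsplit, Matrix.exp_add_of_commute _ _ hcomm]
  have hnsmul : exp ((k:ℝ) • B) = exp B ^ k := by
    rw [Nat.cast_smul_eq_nsmul ℝ k B, Matrix.exp_nsmul]
  have hfrac : ‖exp ((t - k) • B)‖ ≤ max M 1 := by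
    exact le_trans (hM (t - k) ⟨by linarith, by linarith⟩) (le_max_left _ _)
  calc ‖exp (t • B)‖ ≤ ‖exp ((k:ℝ) • B)‖ * ‖exp ((t - k) • B)‖ := by
        rw [hmul]; exact norm_mul_le _ _
  _ ≤ (C₁ * (r:ℝ) ^ k) * max M 1 := by
        apply mul_le_mul _ hfrac (norm_nonneg _) (by positivity)
        rw [hnsmul]; exact hpow k
  _ ≤ (C₁ * ((r:ℝ) ^ (t - 1))) * max M 1 := by
        have : (r:ℝ) ^ k = (r:ℝ) ^ (k:ℝ) := by
          rw [Real.rpow_natCast]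
        rw [this]
        have h6 : (r:ℝ) ^ (k:ℝ) ≤ (r:ℝ) ^ (t-1:ℝ) :=
          Real.rpow_le_rpow_of_exponent_ge hrpos hr1.le (by linarith)
        apply mul_le_mul_of_nonneg_right _ hMpos.le
        exact mul_le_mul_of_nonneg_left h6 hC₁.le
  _ = C₁ * max M 1 / r * Real.exp (-a * t) := by
        rw [Real.rpow_def_of_pos hrpos]
        rw [show -a * t = Real.log r * t by rw [ha]; ring]
        rw [show Real.log ↑r * (t - 1) = Real.log r * t - Real.log r by ring,
          Real.exp_sub]
        rw [Real.exp_log hrpos]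
        field_simp


/-- Entrywise exponential decay of `exp (t • A)` for a real Hurwitz matrix. -/
lemma real_exp_smul_decay (A : Matrix m m ℝ)
    (hA : ∀ μ ∈ spectrum ℂ (A.map Complex.ofReal), μ.re < 0) :
    ∃ C : ℝ, 0 < C ∧ ∃ a : ℝ, 0 < a ∧ ∀ t : ℝ, 0 ≤ t → ∀ i j,
      |exp (t • A) i j| ≤ C * Real.exp (-a * t) := by
  set B := A.map Complex.ofReal with hBdef
  obtain ⟨C, hC, a, ha, hdecay⟩ := exp_smul_decay B hA
  refine ⟨C, hC, a, ha, fun t ht i j => ?_⟩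
  have hcont : Continuous (Complex.ofRealHom.mapMatrix : Matrix m m ℝ →+* Matrix m m ℂ) := by
    have h1 : Continuous (⇑(LinearMap.mapMatrix (Complex.ofRealAm.toLinearMap) :
        Matrix m m ℝ →ₗ[ℝ] Matrix m m ℂ)) :=
      LinearMap.continuous_of_finiteDimensional _
    exact h1
  have hmap : (exp (t • A)).map Complex.ofReal = exp (t • B) := by
    have h2 := map_exp (Complex.ofRealHom.mapMatrix : Matrix m m ℝ →+* Matrix m m ℂ)
      hcont (t • A)
    rw [RingHom.mapMatrix_apply] at h2
    have h3 : (Complex.ofRealHom.mapMatrix : Matrix m m ℝ →+* Matrix m m ℂ) (t • A) = t • B := by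
      rw [RingHom.mapMatrix_apply]
      rw [hBdef]
      exact Matrix.map_smul _ t (fun x => by simp [Complex.real_smul]) A
    rw [h3] at h2
    calc (exp (t • A)).map Complex.ofReal = (exp (t • A)).map ⇑Complex.ofRealHom := rfl
    _ = exp (t • B) := h2
    _ = exp (t • B) := rfl
  have h4 : ((exp (t • A)).map Complex.ofReal) i j = ((exp (t • A) i j : ℝ) : ℂ) := rfl
  have h5 : |exp (t • A) i j| = ‖exp (t • B) i j‖ := by
    rw [← hmap, h4, Complex.norm_real, Real.norm_eq_abs]
  rw [h5]
  exact le_trans (entry_norm_le_linfty _ i j) (hdecay t ht)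


section RealExports
variable (A : Matrix m m ℝ)

/-- entry evaluation as a linear map -/
private def entryLM (i j : m) : Matrix m m ℝ →ₗ[ℝ] ℝ where
  toFun := fun M => M i j
  map_add' := fun _ _ => rfl
  map_smul' := fun _ _ => rfl

lemma exp_entry_continuous (i j : m) : Continuous fun t : ℝ => exp (t • A) i j := by
  have h1 : Continuous fun t : ℝ => exp (t • A) :=
    exp_continuous.comp (continuous_id.smul continuous_const)
  have h2 : Continuous (⇑(entryLM i j)) := (entryLM i j).continuous_of_finiteDimensional
  exact h2.comp h1

lemma exp_entry_hasDerivAt (t : ℝ) (i j : m) :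
    HasDerivAt (fun u : ℝ => exp (u • A) i j) ((exp (t • A) * A) i j) t := by
  have h1 : HasDerivAt (fun u : ℝ => exp (u • A)) (exp (t • A) * A) t :=
    hasDerivAt_exp_smul_const A t
  exact ((entryLM i j).toContinuousLinearMap.hasFDerivAt
    (x := exp (t • A))).comp_hasDerivAt t h1

lemma exp_entry_hasDerivAt' (t : ℝ) (i j : m) :
    HasDerivAt (fun u : ℝ => exp (u • A) i j) ((A * exp (t • A)) i j) t := by
  have h1 : HasDerivAt (fun u : ℝ => exp (u • A)) (A * exp (t • A)) t :=
    hasDerivAt_exp_smul_const' A t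
  exact ((entryLM i j).toContinuousLinearMap.hasFDerivAt
    (x := exp (t • A))).comp_hasDerivAt t h1

lemma commute_exp_smul (t : ℝ) : A * exp (t • A) = exp (t • A) * A :=
  (((Commute.refl A).smul_right t).exp_right).eq

end RealExports

end SpectralMatrix

section Main
open NormedSpace intervalIntegral MeasureTheory Topology
variable {m : Type*} [Fintype m] [DecidableEq m] [Nonempty m]

lemma hasDerivAt_mul_entry {f g : ℝ → Matrix m m ℝ} {f' g' : Matrix m m ℝ} {t : ℝ}
    (hf : ∀ i j, HasDerivAt (fun u => f u i j) (f' i j) t)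
    (hg : ∀ i j, HasDerivAt (fun u => g u i j) (g' i j) t) (i j : m) :
    HasDerivAt (fun u => (f u * g u) i j) ((f' * g t + f t * g') i j) t := by
  have h1 : HasDerivAt (fun u => ∑ k, f u i k * g u k j)
      (∑ k, (f' i k * g t k j + f t i k * g' k j)) t :=
    HasDerivAt.fun_sum fun k _ => (hf i k).mul (hg k j)
  have h2 : (fun u => (f u * g u) i j) = fun u => ∑ k, f u i k * g u k j := by
    funext u; rw [Matrix.mul_apply]
  rw [h2]
  convert h1 using 1
  simp [Matrix.add_apply, Matrix.mul_apply, Finset.sum_add_distrib]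

lemma continuous_entry_three (E₁ E₂ : ℝ → Matrix m m ℝ) (M : Matrix m m ℝ)
    (h1 : ∀ i j, Continuous fun u => E₁ u i j) (h2 : ∀ i j, Continuous fun u => E₂ u i j)
    (i j : m) : Continuous fun u => (E₁ u * M * E₂ u) i j := by
  have : (fun u => (E₁ u * M * E₂ u) i j)
      = fun u => ∑ l, (∑ k, E₁ u i k * M k l) * E₂ u l j := by
    funext u; simp [Matrix.mul_apply]
  rw [this]
  exact continuous_finset_sum _ fun l _ =>
    (continuous_finset_sum _ fun k _ => ((h1 i k).mul continuous_const)).mul (h2 l j)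

lemma expand_entry (P₁ P₂ M : Matrix m m ℝ) (i j : m) :
    (P₁ * M * P₂) i j = ∑ l, ∑ k, P₁ i k * M k l * P₂ l j := by
  simp [Matrix.mul_apply, Finset.sum_mul]

set_option maxHeartbeats 1000000 in
/-- Main convergence: any solution converges entrywise to the integral. -/
lemma conv (A Q : Matrix m m ℝ)
    (hA : ∀ μ ∈ spectrum ℂ (A.map Complex.ofReal), μ.re < 0)
    (S : ℝ → Matrix m m ℝ)
    (hS : ∀ t : ℝ, ∀ i j, HasDerivAt (fun s => S s i j) ((A * S t + S t * Aᵀ + Q) i j) t)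
    (i j : m) :
    Tendsto (fun t => S t i j) atTop
      (𝓝 (∫ s in Set.Ioi (0:ℝ), (exp (s • A) * Q * exp (s • Aᵀ)) i j)) := by
  classical
  obtain ⟨C, hC, a, ha, hd⟩ := real_exp_smul_decay A hA
  set P : ℝ → Matrix m m ℝ := fun u => exp (u • A) with hP
  set P' : ℝ → Matrix m m ℝ := fun u => exp (u • Aᵀ) with hP'
  set E : ℝ → Matrix m m ℝ := fun u => exp (u • (-A)) with hE
  set E' : ℝ → Matrix m m ℝ := fun u => exp (u • (-Aᵀ)) with hE'
  set F : ℝ → Matrix m m ℝ := fun s => P s * Q * P' s with hF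
  set G : ℝ → Matrix m m ℝ := fun u => E u * Q * E' u with hG
  -- transpose decay
  have hPtr : ∀ u : ℝ, P' u = (P u)ᵀ := by
    intro u
    show exp (u • Aᵀ) = (exp (u • A))ᵀ
    rw [← Matrix.transpose_smul, Matrix.exp_transpose]
  have hd' : ∀ t : ℝ, 0 ≤ t → ∀ i j, |P' t i j| ≤ C * Real.exp (-a * t) := by
    intro t ht i j
    rw [hPtr, Matrix.transpose_apply]
    exact hd t ht j i
  -- sandwich bound
  have hsand : ∀ (M : Matrix m m ℝ) (s : ℝ), 0 ≤ s → ∀ i j,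
      |(P s * M * P' s) i j| ≤
        (C * C * ∑ l, ∑ k, |M k l|) * Real.exp (-(2 * a) * s) := by
    intro M s hs i j
    calc |(P s * M * P' s) i j| = |∑ l, ∑ k, P s i k * M k l * P' s l j| := by
          rw [expand_entry]
    _ ≤ ∑ l, |∑ k, P s i k * M k l * P' s l j| := Finset.abs_sum_le_sum_abs _ _
    _ ≤ ∑ l, ∑ k, |P s i k * M k l * P' s l j| :=
          Finset.sum_le_sum fun l _ => Finset.abs_sum_le_sum_abs _ _
    _ ≤ ∑ l, ∑ k, (C * Real.exp (-a * s)) * |M k l| * (C * Real.exp (-a * s)) := by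
          refine Finset.sum_le_sum fun l _ => Finset.sum_le_sum fun k _ => ?_
          rw [abs_mul, abs_mul]
          have h1 := hd s hs i k
          have h2 := hd' s hs l j
          have hnn : (0:ℝ) ≤ C * Real.exp (-a * s) := by positivity
          exact mul_le_mul (mul_le_mul h1 le_rfl (abs_nonneg _) hnn) h2 (abs_nonneg _)
            (by positivity)
    _ = (C * C * ∑ l, ∑ k, |M k l|) * Real.exp (-(2 * a) * s) := by
          have hexp2 : Real.exp (-a * s) * Real.exp (-a * s) = Real.exp (-(2 * a) * s) := by
            rw [← Real.exp_add]; ring_nf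
          have hterm : ∀ l k : m, (C * Real.exp (-a * s)) * |M k l| * (C * Real.exp (-a * s))
              = (C * C * |M k l|) * Real.exp (-(2 * a) * s) := fun l k => by
            rw [← hexp2]; ring
          simp_rw [hterm, ← Finset.sum_mul]
          congr 1
          simp [Finset.mul_sum]
  -- continuity of entries
  have hPcont : ∀ i j, Continuous fun u => P u i j := fun i j => exp_entry_continuous A i j
  have hP'cont : ∀ i j, Continuous fun u => P' u i j := fun i j => exp_entry_continuous Aᵀ i j
  have hEcont : ∀ i j, Continuous fun u => E u i j := fun i j => exp_entry_continuous (-A) i j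
  have hE'cont : ∀ i j, Continuous fun u => E' u i j := fun i j => exp_entry_continuous (-Aᵀ) i j
  have hFcont : ∀ i j, Continuous fun u => F u i j :=
    fun i j => continuous_entry_three P P' Q hPcont hP'cont i j
  have hGcont : ∀ i j, Continuous fun u => G u i j :=
    fun i j => continuous_entry_three E E' Q hEcont hE'cont i j
  -- integrability of F entries on Ioi 0
  have hFint : ∀ i j, IntegrableOn (fun s => F s i j) (Set.Ioi (0:ℝ)) := by
    intro i j
    have h2a : (0:ℝ) < 2 * a := by linarith
    refine Integrable.mono' (((exp_neg_integrableOn_Ioi 0 h2a).const_mul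
      (C * C * ∑ l, ∑ k, |Q k l|))) ((hFcont i j).aestronglyMeasurable.restrict) ?_
    refine (ae_restrict_iff' measurableSet_Ioi).2 (Filter.Eventually.of_forall fun s hs => ?_)
    exact hsand Q s (le_of_lt hs) i j
  -- derivative of E * S * E'
  have hAE : ∀ u : ℝ, A * E u = E u * A := by
    intro u
    have h := commute_exp_smul (-A) u
    have h2 := congrArg Neg.neg h
    simp only [neg_mul, mul_neg, neg_neg] at h2
    exact h2
  have hAE' : ∀ u : ℝ, Aᵀ * E' u = E' u * Aᵀ := by
    intro u
    have h := commute_exp_smul (-Aᵀ) u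
    have h2 := congrArg Neg.neg h
    simp only [neg_mul, mul_neg, neg_neg] at h2
    exact h2
  have hZder : ∀ (u : ℝ) (i j : m),
      HasDerivAt (fun v => (E v * S v * E' v) i j) (G u i j) u := by
    intro u i j
    have hEder : ∀ i j, HasDerivAt (fun v => E v i j) (((-A) * E u) i j) u :=
      fun i j => exp_entry_hasDerivAt' (-A) u i j
    have hE'der : ∀ i j, HasDerivAt (fun v => E' v i j) ((E' u * (-Aᵀ)) i j) u :=
      fun i j => exp_entry_hasDerivAt (-Aᵀ) u i j
    have hES : ∀ i j, HasDerivAt (fun v => (E v * S v) i j)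
        (((-A) * E u * S u + E u * (A * S u + S u * Aᵀ + Q)) i j) u :=
      fun i j => hasDerivAt_mul_entry hEder (hS u) i j
    have h3 := hasDerivAt_mul_entry (f := fun v => E v * S v) (g := E') hES hE'der i j
    convert h3 using 2
    have e1 : E u * (A * (S u * E' u)) = A * (E u * (S u * E' u)) := by
      rw [← mul_assoc, ← hAE u, mul_assoc]
    have e2 : Aᵀ * E' u = E' u * Aᵀ := hAE' u
    rw [hG]
    simp only [mul_add, add_mul, mul_assoc, neg_mul, mul_neg]
    rw [e1, e2]
    refine congrFun (congrFun ?_ i) j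
    abel
  -- inverses
  have hinv1 : ∀ t : ℝ, P t * E t = 1 := by
    intro t
    have hcomm : Commute (t • A) (t • (-A)) :=
      (((Commute.refl A).neg_right).smul_right t).smul_left t
    have h := Matrix.exp_add_of_commute (t • A) (t • (-A)) hcomm
    have h0 : t • A + t • (-A) = 0 := by rw [smul_neg, add_neg_cancel]
    rw [h0, exp_zero] at h
    exact h.symm
  have hinv2 : ∀ t : ℝ, E' t * P' t = 1 := by
    intro t
    have hcomm : Commute (t • (-Aᵀ)) (t • Aᵀ) :=
      (((Commute.refl Aᵀ).neg_left).smul_right t).smul_left t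
    have h := Matrix.exp_add_of_commute (t • (-Aᵀ)) (t • Aᵀ) hcomm
    have h0 : t • (-Aᵀ) + t • Aᵀ = 0 := by rw [smul_neg, neg_add_cancel]
    rw [h0, exp_zero] at h
    exact h.symm
  -- entrywise solution formula
  have hW : ∀ (t : ℝ) (i j : m), (E t * S t * E' t) i j = S 0 i j + ∫ u in (0:ℝ)..t, G u i j := by
    intro t i j
    have hFTC := intervalIntegral.integral_eq_sub_of_hasDerivAt (a := (0:ℝ)) (b := t)
      (f := fun v => (E v * S v * E' v) i j) (f' := fun u => G u i j)
      (fun u _ => hZder u i j) ((hGcont i j).intervalIntegrable _ _)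
    have hE0 : E 0 = 1 := by show exp ((0:ℝ) • (-A)) = 1; rw [zero_smul, exp_zero]
    have hE'0 : E' 0 = 1 := by show exp ((0:ℝ) • (-Aᵀ)) = 1; rw [zero_smul, exp_zero]
    have hz0 : (E 0 * S 0 * E' 0) i j = S 0 i j := by rw [hE0, hE'0, one_mul, mul_one]
    have hFTC' : (∫ u in (0:ℝ)..t, G u i j)
        = (E t * S t * E' t) i j - (E 0 * S 0 * E' 0) i j := hFTC
    rw [hz0] at hFTC'
    linarith [hFTC']
  -- group law pieces
  have hPE : ∀ t u : ℝ, P t * E u = P (t - u) := by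
    intro t u
    have hcomm : Commute (t • A) (u • (-A)) :=
      (((Commute.refl A).neg_right).smul_right u).smul_left t
    have h := Matrix.exp_add_of_commute (t • A) (u • (-A)) hcomm
    have h0 : t • A + u • (-A) = (t - u) • A := by rw [smul_neg, sub_smul, sub_eq_add_neg]
    rw [h0] at h
    exact h.symm
  have hEP : ∀ t u : ℝ, E' u * P' t = P' (t - u) := by
    intro t u
    have hcomm : Commute (u • (-Aᵀ)) (t • Aᵀ) :=
      (((Commute.refl Aᵀ).neg_left).smul_right t).smul_left u
    have h := Matrix.exp_add_of_commute (u • (-Aᵀ)) (t • Aᵀ) hcomm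
    have h0 : u • (-Aᵀ) + t • Aᵀ = (t - u) • Aᵀ := by
      rw [smul_neg, sub_smul, sub_eq_add_neg, add_comm]
    rw [h0] at h
    exact h.symm
  have hPGP : ∀ t u : ℝ, P t * G u * P' t = F (t - u) := by
    intro t u
    have h1 : P t * G u * P' t = (P t * E u) * Q * (E' u * P' t) := by
      show P t * (E u * Q * E' u) * P' t = _
      simp only [mul_assoc]
    rw [h1, hPE, hEP]
  -- exchange sum and integral
  have hexch : ∀ (t : ℝ) (i j : m),
      (P t * (Matrix.of fun k l => ∫ u in (0:ℝ)..t, G u k l) * P' t) i j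
        = ∫ s in (0:ℝ)..t, F s i j := by
    intro t i j
    have hint1 : ∀ (l k : m), IntervalIntegrable
        (fun u => P t i k * G u k l * P' t l j) volume 0 t :=
      fun l k => ((continuous_const.mul (hGcont k l)).mul continuous_const).intervalIntegrable _ _
    rw [expand_entry]
    have hterm : ∀ l k : m, P t i k * (Matrix.of fun k l => ∫ u in (0:ℝ)..t, G u k l) k l
        * P' t l j = ∫ u in (0:ℝ)..t, P t i k * G u k l * P' t l j := by
      intro l k
      rw [Matrix.of_apply, ← intervalIntegral.integral_const_mul,
        ← intervalIntegral.integral_mul_const]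
    simp_rw [hterm]
    have e1 : ∀ l : m, (∑ k, ∫ u in (0:ℝ)..t, P t i k * G u k l * P' t l j)
        = ∫ u in (0:ℝ)..t, ∑ k, P t i k * G u k l * P' t l j :=
      fun l => (intervalIntegral.integral_finset_sum fun k _ => hint1 l k).symm
    have e2 : (∑ l : m, ∫ u in (0:ℝ)..t, ∑ k, P t i k * G u k l * P' t l j)
        = ∫ u in (0:ℝ)..t, ∑ l : m, ∑ k, P t i k * G u k l * P' t l j :=
      (intervalIntegral.integral_finset_sum fun l _ =>
        ((continuous_finset_sum Finset.univ fun k _ =>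
          (continuous_const.mul (hGcont k l)).mul continuous_const).intervalIntegrable _ _)).symm
    rw [Finset.sum_congr rfl fun l _ => e1 l, e2]
    have hintegrand : ∀ u : ℝ, (∑ l, ∑ k, P t i k * G u k l * P' t l j)
        = F (t - u) i j := by
      intro u
      rw [← expand_entry, hPGP]
    rw [intervalIntegral.integral_congr fun u _ => hintegrand u]
    have hsub := intervalIntegral.integral_comp_sub_left (a := (0:ℝ)) (b := t)
      (fun s => F s i j) t
    rw [sub_self, sub_zero] at hsub
    exact hsub
  -- full formula
  have hform : ∀ (t : ℝ) (i j : m),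
      S t i j = (P t * S 0 * P' t) i j + ∫ s in (0:ℝ)..t, F s i j := by
    intro t i j
    have hRmat : E t * S t * E' t = S 0 + Matrix.of (fun k l => ∫ u in (0:ℝ)..t, G u k l) := by
      ext k l
      rw [hW t k l, Matrix.add_apply, Matrix.of_apply]
    have hmat : S t = P t * (E t * S t * E' t) * P' t := by
      have h1 : P t * (E t * S t * E' t) * P' t = (P t * E t) * (S t * (E' t * P' t)) := by
        simp only [mul_assoc]
      rw [h1, hinv1, hinv2, one_mul, mul_one]
    conv_lhs => rw [hmat, hRmat]
    rw [mul_add, add_mul, Matrix.add_apply, hexch]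
  -- limits
  have h2a : (0:ℝ) < 2 * a := by linarith
  have hexptend : Tendsto (fun t : ℝ => Real.exp (-(2 * a) * t)) atTop (𝓝 0) := by
    have h1 : Tendsto (fun t : ℝ => -(2 * a) * t) atTop atBot :=
      Filter.Tendsto.const_mul_atTop_of_neg (by linarith) tendsto_id
    exact Real.tendsto_exp_atBot.comp h1
  have hlim1 : Tendsto (fun t => (P t * S 0 * P' t) i j) atTop (𝓝 0) := by
    apply squeeze_zero_norm' (a := fun t =>
      (C * C * ∑ l, ∑ k, |S 0 k l|) * Real.exp (-(2 * a) * t))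
    · filter_upwards [Filter.eventually_ge_atTop (0:ℝ)] with t ht
      rw [Real.norm_eq_abs]
      exact hsand (S 0) t ht i j
    · have := hexptend.const_mul (C * C * ∑ l, ∑ k, |S 0 k l|)
      simpa using this
  have hlim2 : Tendsto (fun t => ∫ s in (0:ℝ)..t, F s i j) atTop
      (𝓝 (∫ s in Set.Ioi (0:ℝ), F s i j)) :=
    intervalIntegral_tendsto_integral_Ioi 0 (hFint i j) tendsto_id
  have hsum := hlim1.add hlim2
  rw [zero_add] at hsum
  exact hsum.congr fun t => (hform t i j).symm

set_option maxHeartbeats 1000000 in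
/-- The limit matrix satisfies the Lyapunov equation. -/
lemma lyap_eq (A Q : Matrix m m ℝ)
    (hA : ∀ μ ∈ spectrum ℂ (A.map Complex.ofReal), μ.re < 0) :
    A * (Matrix.of fun i j => ∫ s in Set.Ioi (0:ℝ), (exp (s • A) * Q * exp (s • Aᵀ)) i j)
      + (Matrix.of fun i j => ∫ s in Set.Ioi (0:ℝ), (exp (s • A) * Q * exp (s • Aᵀ)) i j) * Aᵀ
      + Q = 0 := by
  classical
  obtain ⟨C, hC, a, ha, hd⟩ := real_exp_smul_decay A hA
  set P : ℝ → Matrix m m ℝ := fun u => exp (u • A) with hP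
  set P' : ℝ → Matrix m m ℝ := fun u => exp (u • Aᵀ) with hP'
  set F : ℝ → Matrix m m ℝ := fun s => P s * Q * P' s with hF
  set X : Matrix m m ℝ := Matrix.of fun i j => ∫ s in Set.Ioi (0:ℝ), F s i j with hX
  have hPtr : ∀ u : ℝ, P' u = (P u)ᵀ := by
    intro u
    show exp (u • Aᵀ) = (exp (u • A))ᵀ
    rw [← Matrix.transpose_smul, Matrix.exp_transpose]
  have hd' : ∀ t : ℝ, 0 ≤ t → ∀ i j, |P' t i j| ≤ C * Real.exp (-a * t) := by
    intro t ht i j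
    rw [hPtr, Matrix.transpose_apply]
    exact hd t ht j i
  have hsand : ∀ (s : ℝ), 0 ≤ s → ∀ i j,
      |F s i j| ≤ (C * C * ∑ l, ∑ k, |Q k l|) * Real.exp (-(2 * a) * s) := by
    intro s hs i j
    calc |F s i j| = |∑ l, ∑ k, P s i k * Q k l * P' s l j| := by
          show |(P s * Q * P' s) i j| = _
          rw [expand_entry]
    _ ≤ ∑ l, |∑ k, P s i k * Q k l * P' s l j| := Finset.abs_sum_le_sum_abs _ _
    _ ≤ ∑ l, ∑ k, |P s i k * Q k l * P' s l j| :=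
          Finset.sum_le_sum fun l _ => Finset.abs_sum_le_sum_abs _ _
    _ ≤ ∑ l, ∑ k, (C * Real.exp (-a * s)) * |Q k l| * (C * Real.exp (-a * s)) := by
          refine Finset.sum_le_sum fun l _ => Finset.sum_le_sum fun k _ => ?_
          rw [abs_mul, abs_mul]
          have h1 := hd s hs i k
          have h2 := hd' s hs l j
          have hnn : (0:ℝ) ≤ C * Real.exp (-a * s) := by positivity
          exact mul_le_mul (mul_le_mul h1 le_rfl (abs_nonneg _) hnn) h2 (abs_nonneg _)
            (by positivity)
    _ = (C * C * ∑ l, ∑ k, |Q k l|) * Real.exp (-(2 * a) * s) := by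
          have hexp2 : Real.exp (-a * s) * Real.exp (-a * s) = Real.exp (-(2 * a) * s) := by
            rw [← Real.exp_add]; ring_nf
          have hterm : ∀ l k : m, (C * Real.exp (-a * s)) * |Q k l| * (C * Real.exp (-a * s))
              = (C * C * |Q k l|) * Real.exp (-(2 * a) * s) := fun l k => by
            rw [← hexp2]; ring
          simp_rw [hterm, ← Finset.sum_mul]
          congr 1
          simp [Finset.mul_sum]
  have hPcont : ∀ i j, Continuous fun u => P u i j := fun i j => exp_entry_continuous A i j
  have hP'cont : ∀ i j, Continuous fun u => P' u i j := fun i j => exp_entry_continuous Aᵀ i j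
  have hFcont : ∀ i j, Continuous fun u => F u i j :=
    fun i j => continuous_entry_three P P' Q hPcont hP'cont i j
  have h2a : (0:ℝ) < 2 * a := by linarith
  have hFint : ∀ i j, IntegrableOn (fun s => F s i j) (Set.Ioi (0:ℝ)) := by
    intro i j
    refine Integrable.mono' (((exp_neg_integrableOn_Ioi 0 h2a).const_mul
      (C * C * ∑ l, ∑ k, |Q k l|))) ((hFcont i j).aestronglyMeasurable.restrict) ?_
    refine (ae_restrict_iff' measurableSet_Ioi).2 (Filter.Eventually.of_forall fun s hs => ?_)
    exact hsand s (le_of_lt hs) i j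
  -- derivative of F entries
  have hFder : ∀ (s : ℝ) (i j : m),
      HasDerivAt (fun u => F u i j) ((A * F s + F s * Aᵀ) i j) s := by
    intro s i j
    have hPder : ∀ i j, HasDerivAt (fun u => P u i j) ((A * P s) i j) s :=
      fun i j => exp_entry_hasDerivAt' A s i j
    have hP'der : ∀ i j, HasDerivAt (fun u => P' u i j) ((P' s * Aᵀ) i j) s :=
      fun i j => exp_entry_hasDerivAt Aᵀ s i j
    have hQder : ∀ i j, HasDerivAt (fun _ : ℝ => Q i j) ((0 : Matrix m m ℝ) i j) s :=
      fun i j => by simpa using hasDerivAt_const s (Q i j)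
    have hPQ : ∀ i j, HasDerivAt (fun u => (P u * Q) i j)
        ((A * P s * Q + P s * (0 : Matrix m m ℝ)) i j) s :=
      fun i j => hasDerivAt_mul_entry (g := fun _ => Q) (g' := 0) hPder hQder i j
    have h3 := hasDerivAt_mul_entry (f := fun u => P u * Q) (g := P') hPQ hP'der i j
    have heq : (A * P s * Q + P s * (0 : Matrix m m ℝ)) * P' s + (P s * Q) * (P' s * Aᵀ)
        = A * F s + F s * Aᵀ := by
      show _ = A * (P s * Q * P' s) + (P s * Q * P' s) * Aᵀ
      simp only [mul_zero, add_zero, mul_assoc]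
    rw [← heq]
    exact h3
  -- improper FTC
  have hFtend : ∀ i j, Tendsto (fun s => F s i j) atTop (𝓝 (0:ℝ)) := by
    intro i j
    apply squeeze_zero_norm' (a := fun s =>
      (C * C * ∑ l, ∑ k, |Q k l|) * Real.exp (-(2 * a) * s))
    · filter_upwards [Filter.eventually_ge_atTop (0:ℝ)] with s hs
      rw [Real.norm_eq_abs]
      exact hsand s hs i j
    · have h1 : Tendsto (fun s : ℝ => -(2 * a) * s) atTop atBot :=
        Filter.Tendsto.const_mul_atTop_of_neg (by linarith) tendsto_id
      have := (Real.tendsto_exp_atBot.comp h1).const_mul (C * C * ∑ l, ∑ k, |Q k l|)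
      simpa using this
  have hderint : ∀ i j, IntegrableOn (fun s => (A * F s + F s * Aᵀ) i j)
      (Set.Ioi (0:ℝ)) := by
    intro i j
    have heq : (fun s => (A * F s + F s * Aᵀ) i j)
        = fun s => (∑ k, A i k * F s k j) + ∑ k, F s i k * Aᵀ k j := by
      funext s
      simp [Matrix.add_apply, Matrix.mul_apply]
    rw [heq]
    exact ((integrable_finset_sum _ fun k _ => (hFint k j).const_mul (A i k)).add
      (integrable_finset_sum _ fun k _ => (hFint i k).mul_const (Aᵀ k j)))
  have hIoi : ∀ i j, (∫ s in Set.Ioi (0:ℝ), (A * F s + F s * Aᵀ) i j) = 0 - F 0 i j := by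
    intro i j
    exact integral_Ioi_of_hasDerivAt_of_tendsto' (fun s _ => hFder s i j)
      (hderint i j) (hFtend i j)
  have hF0 : ∀ i j : m, F 0 i j = Q i j := by
    intro i j
    have hP0 : P 0 = 1 := by show exp ((0:ℝ) • A) = 1; rw [zero_smul, exp_zero]
    have hP'0 : P' 0 = 1 := by show exp ((0:ℝ) • Aᵀ) = 1; rw [zero_smul, exp_zero]
    show (P 0 * Q * P' 0) i j = Q i j
    rw [hP0, hP'0, one_mul, mul_one]
  -- exchange sums and integrals for X
  have hXentry : ∀ i j : m, (A * X + X * Aᵀ) i j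
      = ∫ s in Set.Ioi (0:ℝ), (A * F s + F s * Aᵀ) i j := by
    intro i j
    have e1 : (A * X) i j = ∑ k, A i k * ∫ s in Set.Ioi (0:ℝ), F s k j := by
      simp [Matrix.mul_apply, hX]
    have e2 : (X * Aᵀ) i j = ∑ k, (∫ s in Set.Ioi (0:ℝ), F s i k) * Aᵀ k j := by
      simp [Matrix.mul_apply, hX]
    have e3 : (∑ k, A i k * ∫ s in Set.Ioi (0:ℝ), F s k j)
        = ∫ s in Set.Ioi (0:ℝ), ∑ k, A i k * F s k j := by
      rw [Finset.sum_congr rfl fun k _ => (MeasureTheory.integral_const_mul (A i k) _).symm]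
      exact (integral_finset_sum _ fun k _ => (hFint k j).const_mul (A i k)).symm
    have e4 : (∑ k, (∫ s in Set.Ioi (0:ℝ), F s i k) * Aᵀ k j)
        = ∫ s in Set.Ioi (0:ℝ), ∑ k, F s i k * Aᵀ k j := by
      rw [Finset.sum_congr rfl fun k _ => (MeasureTheory.integral_mul_const (Aᵀ k j) _).symm]
      exact (integral_finset_sum _ fun k _ => (hFint i k).mul_const (Aᵀ k j)).symm
    rw [Matrix.add_apply, e1, e2, e3, e4]
    rw [← integral_add (integrable_finset_sum _ fun k _ => (hFint k j).const_mul (A i k))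
      (integrable_finset_sum _ fun k _ => (hFint i k).mul_const (Aᵀ k j))]
    refine integral_congr_ae (Filter.Eventually.of_forall fun s => ?_)
    simp [Matrix.add_apply, Matrix.mul_apply]
  ext i j
  rw [Matrix.add_apply, hXentry i j, hIoi i j, hF0 i j]
  simp

end Main

end LyapunovAux

/-- For Hurwitz `A`, every solution of `Σ'(t) = A·Σ(t) + Σ(t)·Aᵀ + Q`
converges entrywise to `X∞ = ∫₀^∞ exp(sA)·Q·exp(sAᵀ) ds`, the unique solution of
`A·X + X·Aᵀ + Q = 0`; in particular, the limit is independent of the initial condition. -/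
theorem lyapunov_ode_convergence
    (n : ℕ) (A Q : Matrix (Fin n) (Fin n) ℝ) (hA : IsHurwitz A)
    (Xinf : Matrix (Fin n) (Fin n) ℝ)
    (hXinf : Xinf = Matrix.of fun i j => ∫ s in Set.Ioi (0 : ℝ),
      (NormedSpace.exp (s • A) * Q * NormedSpace.exp (s • Aᵀ)) i j)
    (Sig0 : Matrix (Fin n) (Fin n) ℝ)
    (S : ℝ → Matrix (Fin n) (Fin n) ℝ) (hS0 : S 0 = Sig0)
    (hS : ∀ t : ℝ, ∀ i j,
      HasDerivAt (fun s => S s i j) ((A * S t + S t * Aᵀ + Q) i j) t) :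
    (∀ i j, Tendsto (fun t => S t i j) atTop (nhds (Xinf i j))) ∧
    (A * Xinf + Xinf * Aᵀ + Q = 0) ∧
    (∀ X : Matrix (Fin n) (Fin n) ℝ, A * X + X * Aᵀ + Q = 0 → X = Xinf) := by
  rcases Nat.eq_zero_or_pos n with hn | hn
  · subst hn
    refine ⟨fun i j => i.elim0, ?_, fun X _ => ?_⟩
    · ext i j; exact i.elim0
    · ext i j; exact i.elim0
  · haveI : Nonempty (Fin n) := ⟨⟨0, hn⟩⟩
    have hA' : ∀ μ ∈ spectrum ℂ (A.map Complex.ofReal), μ.re < 0 := hA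
    have hXe : ∀ i j, Xinf i j = ∫ s in Set.Ioi (0:ℝ),
        (NormedSpace.exp (s • A) * Q * NormedSpace.exp (s • Aᵀ)) i j := by
      intro i j; rw [hXinf]; rfl
    refine ⟨?_, ?_, ?_⟩
    · intro i j
      rw [hXe i j]
      exact conv A Q hA' S hS i j
    · rw [hXinf]
      exact lyap_eq A Q hA'
    · intro X hX
      have hconst : ∀ t : ℝ, ∀ i j,
          HasDerivAt (fun _ : ℝ => X i j) ((A * X + X * Aᵀ + Q) i j) t := by
        intro t i j
        rw [hX]
        simpa using hasDerivAt_const t (X i j)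
      ext i j
      have h1 := conv A Q hA' (fun _ => X) hconst i j
      have h2 : Tendsto (fun _ : ℝ => X i j) atTop (nhds (X i j)) := tendsto_const_nhds
      have h3 := tendsto_nhds_unique h2 h1
      rw [h3, hXe i j]
end
end

section
/- Let n and m be positive even integers and let Λ be a complex (m/2)×n matrix. Then every entry of the n×m complex matrix B = 2i·Θ_n·[−Λ† Λᵀ]·Γ_m is real, where [−Λ† Λᵀ] denotes the n×m horizontal concatenation of −Λ† and Λᵀ. -/
open Matrix
open scoped Kronecker ComplexConjugate

noncomputable section

lemma pmat_apply_eq_zero (h : ℕ) (l k : Fin (2*h))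
    (hc : ¬ (((l:ℕ) < h ∧ (k:ℕ) = 2*(l:ℕ)) ∨ (h ≤ (l:ℕ) ∧ (k:ℕ) = 2*((l:ℕ) - h)+1))) :
    Pmat (2*h) l k = 0 := by
  rw [Pmat, Matrix.of_apply, if_neg]
  intro hc2
  exact hc (by omega)

lemma gamma_apply (h : ℕ) (l j : Fin (2*h)) :
    Gamma (2*h) l j =
      if (l:ℕ) < h then
        (if (j:ℕ)/2 = (l:ℕ) then (if (j:ℕ)%2 = 0 then (1/2:ℂ) else Complex.I/2) else 0)
      else
        (if (j:ℕ)/2 = (l:ℕ) - h then (if (j:ℕ)%2 = 0 then (1/2:ℂ) else -(Complex.I/2)) else 0) := by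
  have hl := l.isLt
  have hj := j.isLt
  rw [Gamma, Matrix.mul_apply]
  by_cases hlh : (l:ℕ) < h
  · rw [Finset.sum_eq_single (⟨2*l, by omega⟩ : Fin (2*h))]
    · have hp : Pmat (2*h) l ⟨2*l, by omega⟩ = 1 := by
        rw [Pmat, Matrix.of_apply, if_pos]
        exact Or.inl ⟨by omega, rfl⟩
      rw [hp, one_mul]
      show (if (2*(l:ℕ))/2 = (j:ℕ)/2 then
        (if (j:ℕ)%2 = 0 then (1/2:ℂ) else if (2*(l:ℕ))%2 = 0 then Complex.I/2 else -(Complex.I/2))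
        else 0) = _
      have h2 : (2*(l:ℕ))/2 = (l:ℕ) := by omega
      have h3 : (2*(l:ℕ))%2 = 0 := by omega
      rw [h2, if_pos h3, if_pos hlh]
      rcases eq_or_ne ((j:ℕ)/2) (l:ℕ) with he | he
      · rw [if_pos he.symm, if_pos he]
      · rw [if_neg (Ne.symm he), if_neg he]
    · intro k _ hk
      rw [pmat_apply_eq_zero h l k, zero_mul]
      intro hc
      exact hk (Fin.ext (show (k:ℕ) = 2*(l:ℕ) by omega))
    · simp
  · rw [Finset.sum_eq_single (⟨2*((l:ℕ)-h)+1, by omega⟩ : Fin (2*h))]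
    · have hp : Pmat (2*h) l ⟨2*((l:ℕ)-h)+1, by omega⟩ = 1 := by
        rw [Pmat, Matrix.of_apply, if_pos]
        refine Or.inr ⟨by omega, ?_⟩
        show 2*((l:ℕ)-h)+1 = 2*((l:ℕ) - 2*h/2)+1
        omega
      rw [hp, one_mul]
      show (if (2*((l:ℕ)-h)+1)/2 = (j:ℕ)/2 then
        (if (j:ℕ)%2 = 0 then (1/2:ℂ) else if (2*((l:ℕ)-h)+1)%2 = 0 then Complex.I/2 else -(Complex.I/2))
        else 0) = _
      have h2 : (2*((l:ℕ)-h)+1)/2 = (l:ℕ)-h := by omega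
      rw [h2, if_neg (by omega : ¬ (2*((l:ℕ)-h)+1)%2 = 0), if_neg hlh]
      rcases eq_or_ne ((j:ℕ)/2) ((l:ℕ)-h) with he | he
      · rw [if_pos he.symm, if_pos he]
      · rw [if_neg (Ne.symm he), if_neg he]
    · intro k _ hk
      rw [pmat_apply_eq_zero h l k, zero_mul]
      intro hc
      exact hk (Fin.ext (show (k:ℕ) = 2*((l:ℕ)-h)+1 by omega))
    · simp

lemma theta_mul_apply {n c : ℕ} (hn : n % 2 = 0) (X : Matrix (Fin n) (Fin c) ℂ)
    (r : Fin n) (l : Fin c) :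
    (Theta ℂ n * X) r l =
      if h2 : (r:ℕ) % 2 = 0 then X ⟨(r:ℕ)+1, by have := r.isLt; omega⟩ l
      else -(X ⟨(r:ℕ)-1, by have := r.isLt; omega⟩ l) := by
  have hr := r.isLt
  rw [Matrix.mul_apply]
  by_cases h2 : (r:ℕ) % 2 = 0
  · rw [dif_pos h2, Finset.sum_eq_single (⟨(r:ℕ)+1, by omega⟩ : Fin n)]
    · have : Theta ℂ n r ⟨(r:ℕ)+1, by omega⟩ = 1 := by
        rw [Theta, Matrix.of_apply, if_pos ⟨h2, rfl⟩]
      rw [this, one_mul]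
    · intro k _ hk
      have : Theta ℂ n r k = 0 := by
        rw [Theta, Matrix.of_apply, if_neg, if_neg]
        · rintro ⟨hk2, hk3⟩
          omega
        · rintro ⟨_, hk3⟩
          exact hk (Fin.ext (show (k:ℕ) = (r:ℕ)+1 by omega))
      rw [this, zero_mul]
    · simp
  · rw [dif_neg h2, Finset.sum_eq_single (⟨(r:ℕ)-1, by omega⟩ : Fin n)]
    · have : Theta ℂ n r ⟨(r:ℕ)-1, by omega⟩ = -1 := by
        rw [Theta, Matrix.of_apply, if_neg, if_pos]
        · exact ⟨show ((r:ℕ)-1)%2 = 0 by omega, show (r:ℕ) = ((r:ℕ)-1)+1 by omega⟩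
        · rintro ⟨hk2, _⟩
          exact h2 hk2
      rw [this]
      ring
    · intro k _ hk
      have : Theta ℂ n r k = 0 := by
        rw [Theta, Matrix.of_apply, if_neg, if_neg]
        · rintro ⟨hk2, hk3⟩
          exact hk (Fin.ext (show (k:ℕ) = (r:ℕ)-1 by omega))
        · rintro ⟨hk2, _⟩
          exact h2 hk2
      rw [this, zero_mul]
    · simp

lemma im_even (z : ℂ) :
    (2 * Complex.I * (-(conj z) * (1/2) + z * (1/2))).im = 0 := by
  simp [Complex.mul_im, Complex.mul_re, Complex.add_im, Complex.add_re]

lemma im_odd (z : ℂ) :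
    (2 * Complex.I * (-(conj z) * (Complex.I/2) + z * -(Complex.I/2))).im = 0 := by
  simp [Complex.mul_im, Complex.mul_re, Complex.add_im, Complex.add_re]

lemma im_even' (z : ℂ) :
    (2 * Complex.I * (- -(conj z) * (1/2) + -z * (1/2))).im = 0 := by
  simp [Complex.mul_im, Complex.mul_re, Complex.add_im, Complex.add_re]

lemma im_odd' (z : ℂ) :
    (2 * Complex.I * (- -(conj z) * (Complex.I/2) + -z * -(Complex.I/2))).im = 0 := by
  simp [Complex.mul_im, Complex.mul_re, Complex.add_im, Complex.add_re]

set_option maxHeartbeats 1000000 in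
/-- Every entry of `B = 2i·Θ_n·[−Λ† Λᵀ]·Γ_m` is real. -/
theorem B_entries_real
    (n h : ℕ) (hn : Even n) (hn0 : 0 < n) (hh0 : 0 < h)
    (Λ : Matrix (Fin h) (Fin n) ℂ)
    (B : Matrix (Fin n) (Fin (2 * h)) ℂ)
    (hB : B = (2 * Complex.I) • (Theta ℂ n * hconcat (-Λᴴ) Λᵀ * Gamma (2 * h))) :
    ∀ i j, (B i j).im = 0 := by
  intro r j
  have hn2 : n % 2 = 0 := Nat.even_iff.mp hn
  have hr := r.isLt
  have hj := j.isLt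
  subst hB
  rw [Matrix.smul_apply, smul_eq_mul, Matrix.mul_apply]
  -- set up the two special column indices
  set q : ℕ := (j:ℕ)/2 with hq
  have hqh : q < h := by omega
  set l0 : Fin (2*h) := ⟨q, by omega⟩ with hl0
  set l1 : Fin (2*h) := ⟨q+h, by omega⟩ with hl1
  have hsum : ∀ l : Fin (2*h), l ≠ l0 → l ≠ l1 →
      (Theta ℂ n * hconcat (-Λᴴ) Λᵀ) r l * Gamma (2*h) l j = 0 := by
    intro l h0 h1
    rw [gamma_apply]
    have hv0 : (l:ℕ) ≠ q := fun hc => h0 (Fin.ext hc)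
    have hv1 : (l:ℕ) ≠ q + h := fun hc => h1 (Fin.ext hc)
    have hl := l.isLt
    by_cases hlh : (l:ℕ) < h
    · rw [if_pos hlh, if_neg (by omega), mul_zero]
    · rw [if_neg hlh, if_neg (by omega), mul_zero]
  have hne : l0 ≠ l1 := by
    intro hc
    have := Fin.val_eq_of_eq hc
    simp only [hl0, hl1] at this
    omega
  rw [show (Finset.univ : Finset (Fin (2*h))) = insert l0 (Finset.univ.erase l0) by
        rw [Finset.insert_erase (Finset.mem_univ l0)],
      Finset.sum_insert (Finset.notMem_erase l0 _),
      Finset.sum_eq_single_of_mem l1 (Finset.mem_erase.mpr ⟨hne.symm, Finset.mem_univ l1⟩)]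
  · -- now explicit two-term sum
    have hg0 : Gamma (2*h) l0 j =
        (if (j:ℕ)%2 = 0 then (1/2:ℂ) else Complex.I/2) := by
      rw [gamma_apply, if_pos (show ((l0:ℕ) < h) from hqh), if_pos rfl]
    have hg1 : Gamma (2*h) l1 j =
        (if (j:ℕ)%2 = 0 then (1/2:ℂ) else -(Complex.I/2)) := by
      rw [gamma_apply, if_neg (show ¬((l1:ℕ) < h) by simp [hl1]), if_pos]
      show q = q + h - h
      omega
    rw [hg0, hg1, theta_mul_apply hn2, theta_mul_apply hn2]
    by_cases h2 : (r:ℕ) % 2 = 0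
    · rw [dif_pos h2, dif_pos h2]
      set s : Fin n := ⟨(r:ℕ)+1, by omega⟩ with hs
      have hc0 : hconcat (-Λᴴ) Λᵀ s l0 = -(conj (Λ ⟨q, hqh⟩ s)) := by
        rw [hconcat, Matrix.of_apply, dif_pos (show ((l0:ℕ) < h) from hqh)]
        rfl
      have hc1 : hconcat (-Λᴴ) Λᵀ s l1 = Λ ⟨q, hqh⟩ s := by
        rw [hconcat, Matrix.of_apply, dif_neg (show ¬((l1:ℕ) < h) by simp [hl1])]
        show Λᵀ s ⟨q + h - h, _⟩ = _
        exact congrArg _ (Fin.ext (show q + h - h = q by omega))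
      rw [hc0, hc1]
      by_cases hjp : (j:ℕ)%2 = 0
      · rw [if_pos hjp, if_pos hjp]
        exact im_even _
      · rw [if_neg hjp, if_neg hjp]
        exact im_odd _
    · rw [dif_neg h2, dif_neg h2]
      set s : Fin n := ⟨(r:ℕ)-1, by omega⟩ with hs
      have hc0 : hconcat (-Λᴴ) Λᵀ s l0 = -(conj (Λ ⟨q, hqh⟩ s)) := by
        rw [hconcat, Matrix.of_apply, dif_pos (show ((l0:ℕ) < h) from hqh)]
        rfl
      have hc1 : hconcat (-Λᴴ) Λᵀ s l1 = Λ ⟨q, hqh⟩ s := by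
        rw [hconcat, Matrix.of_apply, dif_neg (show ¬((l1:ℕ) < h) by simp [hl1])]
        show Λᵀ s ⟨q + h - h, _⟩ = _
        exact congrArg _ (Fin.ext (show q + h - h = q by omega))
      rw [hc0, hc1]
      by_cases hjp : (j:ℕ)%2 = 0
      · rw [if_pos hjp, if_pos hjp]
        exact im_even' _
      · rw [if_neg hjp, if_neg hjp]
        exact im_odd' _
  · intro l hl hlne
    exact hsum l (Finset.ne_of_mem_erase hl) hlne
end
end
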